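/- arXiv:1703.07160 — 3 statements merged into one kernel-verified Lean document; each statement's English description precedes it below -/
import Mathlib

section
/- If f : [0,T] → ℝ is absolutely continuous and α ∈ (0,1), then I^α f is absolutely continuous on [0,T] and (I^α f)'(t) = I^α f'(t) + (t^{α-1}/Γ(α)) f(0) for almost every t ∈ (0,T). -/
open MeasureTheory Set intervalIntegral Filter

/-- Riemann–Liouville fractional integral of order `α` with base point `0`. -/
noncomputable def riemannLiouville (α : ℝ) (f : ℝ → ℝ) (t : ℝ) : ℝ :=
  (1 / Real.Gamma α) * ∫ τ in (0:ℝ)..t, (t - τ) ^ (α - 1) * f τ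

namespace RLaux

lemma avg_bound {G : ℝ → ℝ} (hG : Integrable G) {a b : ℝ} (hab : a < b) (c : ℝ) :
    ‖(b - a)⁻¹ • (∫ z in a..b, G z) - c‖ ≤ ⨍ z in Icc a b, ‖G z - c‖ := by
  have hba : 0 < b - a := by linarith
  have h1 : (∫ z in a..b, G z) - (b - a) • c = ∫ z in a..b, (G z - c) := by
    rw [intervalIntegral.integral_sub hG.intervalIntegrable intervalIntegrable_const,
      intervalIntegral.integral_const]
  have h2 : (b - a)⁻¹ • (∫ z in a..b, G z) - c
      = (b - a)⁻¹ • ((∫ z in a..b, G z) - (b - a) • c) := by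
    rw [smul_sub, smul_smul, inv_mul_cancel₀ hba.ne', one_smul]
  rw [h2, h1, setAverage_eq, norm_smul, Real.volume_real_Icc,
    max_eq_left hba.le]
  rw [norm_inv, Real.norm_of_nonneg hba.le]
  have h3 : ‖∫ z in a..b, (G z - c)‖ ≤ ∫ z in Icc a b, ‖G z - c‖ := by
    rw [integral_Icc_eq_integral_Ioc, ← intervalIntegral.integral_of_le hab.le]
    exact intervalIntegral.norm_integral_le_integral_norm hab.le
  have := mul_le_mul_of_nonneg_left h3 (inv_nonneg.2 hba.le)
  simpa [smul_eq_mul] using this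

lemma ae_hasDerivAt_primitive {G : ℝ → ℝ} (hG : Integrable G) :
    ∀ᵐ x ∂(volume : Measure ℝ), HasDerivAt (fun u => ∫ s in (0:ℝ)..u, G s) (G x) x := by
  set v := IsUnifLocDoublingMeasure.vitaliFamily (volume : Measure ℝ) 1 with hv
  filter_upwards [v.ae_tendsto_average_norm_sub hG.locallyIntegrable] with x hx
  rw [hasDerivAt_iff_tendsto_slope, ← nhdsLT_sup_nhdsGT, tendsto_sup]
  have hslope : ∀ y : ℝ, slope (fun u => ∫ s in (0:ℝ)..u, G s) x y
      = (y - x)⁻¹ • (∫ s in x..y, G s) := by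
    intro y
    rw [slope_def_module]
    congr 1
    exact intervalIntegral.integral_interval_sub_left hG.intervalIntegrable hG.intervalIntegrable
  constructor
  · have hL := hx.comp (Real.tendsto_Icc_vitaliFamily_left x)
    rw [tendsto_iff_norm_sub_tendsto_zero]
    refine squeeze_zero' ?_ ?_ hL
    · exact Eventually.of_forall fun y => norm_nonneg _
    · filter_upwards [self_mem_nhdsWithin] with y (hy : y < x)
      have h1 : slope (fun u => ∫ s in (0:ℝ)..u, G s) x y
          = (x - y)⁻¹ • (∫ s in y..x, G s) := by
        rw [slope_comm, slope_def_module]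
        congr 1
        exact intervalIntegral.integral_interval_sub_left hG.intervalIntegrable
          hG.intervalIntegrable
      rw [h1]
      exact avg_bound hG hy (G x)
  · have hR := hx.comp (Real.tendsto_Icc_vitaliFamily_right x)
    rw [tendsto_iff_norm_sub_tendsto_zero]
    refine squeeze_zero' ?_ ?_ hR
    · exact Eventually.of_forall fun y => norm_nonneg _
    · filter_upwards [self_mem_nhdsWithin] with y (hy : x < y)
      rw [hslope]
      exact avg_bound hG hy (G x)

lemma rpow_int_eval {α : ℝ} (hα : 0 < α) {τ t : ℝ} (hτt : τ ≤ t) :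
    ∫ s in Icc τ t, (s - τ) ^ (α - 1) = (t - τ) ^ α / α := by
  rw [integral_Icc_eq_integral_Ioc, ← intervalIntegral.integral_of_le hτt]
  rw [intervalIntegral.integral_comp_sub_right (fun x => x ^ (α - 1)) τ]
  rw [integral_rpow (Or.inl (by linarith))]
  rw [sub_self, Real.zero_rpow (by linarith), sub_add_cancel, sub_zero]

lemma rpow_int_eval' {α : ℝ} (hα : 0 < α) {τ t : ℝ} (hτt : τ ≤ t) :
    ∫ s in Icc τ t, (t - s) ^ (α - 1) = (t - τ) ^ α / α := by
  rw [integral_Icc_eq_integral_Ioc, ← intervalIntegral.integral_of_le hτt]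
  rw [intervalIntegral.integral_comp_sub_left (fun x => x ^ (α - 1)) t]
  rw [integral_rpow (Or.inl (by linarith))]
  rw [sub_self, Real.zero_rpow (by linarith), sub_add_cancel, sub_zero]

lemma slice_eq {t : ℝ} (G : ℝ → ℝ → ℝ) {s : ℝ} (hs : s ∈ Ioc (0:ℝ) t) :
    ∫ τ in Ioc (0:ℝ) t, ({p : ℝ × ℝ | p.2 ≤ p.1}.indicator (fun q => G q.1 q.2) (s, τ))
      = ∫ τ in Ioc (0:ℝ) s, G s τ := by
  have h1 : ∀ τ : ℝ, ({p : ℝ × ℝ | p.2 ≤ p.1}.indicator (fun q => G q.1 q.2) (s, τ))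
      = (Iic s).indicator (fun τ => G s τ) τ := by
    intro τ
    by_cases h : τ ≤ s <;> simp [indicator, h]
  simp only [h1]
  rw [setIntegral_indicator measurableSet_Iic, Ioc_inter_Iic, min_eq_right hs.2]

lemma triangle_swap {t : ℝ} (G : ℝ → ℝ → ℝ)
    (hG : Integrable (fun p : ℝ × ℝ =>
        ({p : ℝ × ℝ | p.2 ≤ p.1}.indicator (fun q => G q.1 q.2) p))
      ((volume.restrict (Ioc 0 t)).prod (volume.restrict (Ioc 0 t)))) :
    ∫ s in Ioc (0:ℝ) t, ∫ τ in Ioc (0:ℝ) s, G s τ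
      = ∫ τ in Ioc (0:ℝ) t, ∫ s in Icc τ t, G s τ := by
  have key2 : ∀ τ ∈ Ioc (0:ℝ) t,
      (∫ s in Ioc (0:ℝ) t, ({p : ℝ × ℝ | p.2 ≤ p.1}.indicator (fun q => G q.1 q.2) (s, τ)))
      = ∫ s in Icc τ t, G s τ := by
    intro τ hτ
    have h1 : ∀ s : ℝ, ({p : ℝ × ℝ | p.2 ≤ p.1}.indicator (fun q => G q.1 q.2) (s, τ))
        = (Ici τ).indicator (fun s => G s τ) s := by
      intro s
      by_cases h : τ ≤ s <;> simp [indicator, h]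
    simp only [h1]
    rw [setIntegral_indicator measurableSet_Ici]
    have hset : Ioc (0:ℝ) t ∩ Ici τ = Icc τ t := by
      ext x
      simp only [mem_inter_iff, mem_Ioc, mem_Ici, mem_Icc]
      constructor
      · rintro ⟨⟨_, hx2⟩, hx3⟩; exact ⟨hx3, hx2⟩
      · rintro ⟨hx1, hx2⟩; exact ⟨⟨lt_of_lt_of_le hτ.1 hx1, hx2⟩, hx1⟩
    rw [hset]
  calc ∫ s in Ioc (0:ℝ) t, ∫ τ in Ioc (0:ℝ) s, G s τ
      = ∫ s in Ioc (0:ℝ) t, ∫ τ in Ioc (0:ℝ) t,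
          ({p : ℝ × ℝ | p.2 ≤ p.1}.indicator (fun q => G q.1 q.2) (s, τ)) :=
        (setIntegral_congr_fun measurableSet_Ioc fun s hs => (slice_eq G hs).symm)
    _ = ∫ τ in Ioc (0:ℝ) t, ∫ s in Ioc (0:ℝ) t,
          ({p : ℝ × ℝ | p.2 ≤ p.1}.indicator (fun q => G q.1 q.2) (s, τ)) :=
        integral_integral_swap hG
    _ = ∫ τ in Ioc (0:ℝ) t, ∫ s in Icc τ t, G s τ :=
        setIntegral_congr_fun measurableSet_Ioc key2

lemma intOn_rpow_shift {α : ℝ} (hα : 0 < α) (τ t : ℝ) :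
    IntegrableOn (fun s => (s - τ) ^ (α - 1)) (Icc τ t) := by
  rcases le_or_gt τ t with h | h
  · have h1 : IntervalIntegrable (fun x : ℝ => x ^ (α - 1)) volume 0 (t - τ) :=
      intervalIntegrable_rpow' (by linarith)
    have h2 := h1.comp_sub_right τ
    simp only [zero_add, sub_add_cancel] at h2
    rw [integrableOn_Icc_iff_integrableOn_Ioc]
    exact h2.1
  · rw [Icc_eq_empty (by linarith)]; exact integrableOn_empty

lemma intOn_rpow_shift' {α : ℝ} (hα : 0 < α) (t : ℝ) :
    IntegrableOn (fun s => (t - s) ^ (α - 1)) (Ioc 0 t) := by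
  rcases le_or_gt 0 t with h | h
  · have h1 : IntervalIntegrable (fun x : ℝ => x ^ (α - 1)) volume 0 t :=
      intervalIntegrable_rpow' (by linarith)
    have h2 := h1.comp_sub_left t
    simp only [sub_zero, sub_self] at h2
    exact h2.symm.1
  · rw [Ioc_eq_empty (by linarith)]; exact integrableOn_empty

lemma phiA_int {T α : ℝ} (hα : α ∈ Ioo (0:ℝ) 1) {f' : ℝ → ℝ} (hm : StronglyMeasurable f')
    (hf' : IntegrableOn f' (Icc 0 T)) {t : ℝ} (ht : t ∈ Icc (0:ℝ) T) :
    Integrable (fun p : ℝ × ℝ =>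
        ({p : ℝ × ℝ | p.2 ≤ p.1}.indicator (fun q => (q.1 - q.2) ^ (α - 1) * f' q.2) p))
      ((volume.restrict (Ioc 0 t)).prod (volume.restrict (Ioc 0 t))) := by
  have hsub : Ioc (0:ℝ) t ⊆ Icc 0 T := fun x hx => ⟨hx.1.le, hx.2.trans ht.2⟩
  have hf't : IntegrableOn f' (Ioc 0 t) := hf'.mono_set hsub
  have hS : MeasurableSet {p : ℝ × ℝ | p.2 ≤ p.1} :=
    measurableSet_le measurable_snd measurable_fst
  have hker : Measurable fun p : ℝ × ℝ => (p.1 - p.2) ^ (α - 1) * f' p.2 := by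
    have h := hm.measurable
    fun_prop
  have hsm : StronglyMeasurable (fun p : ℝ × ℝ =>
      ({p : ℝ × ℝ | p.2 ≤ p.1}.indicator (fun q => (q.1 - q.2) ^ (α - 1) * f' q.2) p)) :=
    hker.stronglyMeasurable.indicator hS
  refine (integrable_prod_iff' hsm.aestronglyMeasurable).2 ⟨?_, ?_⟩
  · filter_upwards [ae_restrict_mem measurableSet_Ioc] with τ hτ
    have heq : (fun s => ({p : ℝ × ℝ | p.2 ≤ p.1}.indicator
        (fun q => (q.1 - q.2) ^ (α - 1) * f' q.2) (s, τ)))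
        = (Ici τ).indicator (fun s => (s - τ) ^ (α - 1) * f' τ) := by
      funext s; by_cases h : τ ≤ s <;> simp [indicator, h]
    rw [heq, integrable_indicator_iff measurableSet_Ici, IntegrableOn,
      Measure.restrict_restrict measurableSet_Ici]
    refine IntegrableOn.mono_set ((intOn_rpow_shift hα.1 τ t).mul_const _) ?_
    intro x hx
    exact ⟨hx.1, hx.2.2⟩
  · have hb : ∀ τ ∈ Ioc (0:ℝ) t,
        (∫ s in Ioc (0:ℝ) t, ‖({p : ℝ × ℝ | p.2 ≤ p.1}.indicator
          (fun q => (q.1 - q.2) ^ (α - 1) * f' q.2) (s, τ))‖)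
        ≤ t ^ α / α * |f' τ| := by
      intro τ hτ
      have heq : ∀ s : ℝ, ‖({p : ℝ × ℝ | p.2 ≤ p.1}.indicator
          (fun q => (q.1 - q.2) ^ (α - 1) * f' q.2) (s, τ))‖
          = (Ici τ).indicator (fun s => ‖(s - τ) ^ (α - 1) * f' τ‖) s := by
        intro s; by_cases h : τ ≤ s <;> simp [indicator, h]
      simp only [heq]
      rw [setIntegral_indicator measurableSet_Ici]
      have hIsub : Ioc (0:ℝ) t ∩ Ici τ ⊆ Icc τ t := fun x hx => ⟨hx.2, hx.1.2⟩
      have hInt : IntegrableOn (fun s => ‖(s - τ) ^ (α - 1) * f' τ‖) (Icc τ t) :=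
        ((intOn_rpow_shift hα.1 τ t).mul_const _).norm
      have h1 : (∫ s in Ioc (0:ℝ) t ∩ Ici τ, ‖(s - τ) ^ (α - 1) * f' τ‖)
          ≤ ∫ s in Icc τ t, ‖(s - τ) ^ (α - 1) * f' τ‖ := by
        refine setIntegral_mono_set hInt ?_ (HasSubset.Subset.eventuallyLE hIsub)
        exact Eventually.of_forall fun s => norm_nonneg _
      refine h1.trans ?_
      have h2 : ∀ s ∈ Icc τ t, ‖(s - τ) ^ (α - 1) * f' τ‖ = (s - τ) ^ (α - 1) * |f' τ| := by
        intro s hs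
        rw [norm_mul, Real.norm_eq_abs, Real.norm_eq_abs,
          abs_of_nonneg (Real.rpow_nonneg (by linarith [hs.1]) _)]
      rw [setIntegral_congr_fun measurableSet_Icc h2, MeasureTheory.integral_mul_const,
        rpow_int_eval hα.1 hτ.2]
      have h3 : (t - τ) ^ α ≤ t ^ α :=
        Real.rpow_le_rpow (by linarith [hτ.2]) (by linarith [hτ.1]) hα.1.le
      have h4 : (t - τ) ^ α / α ≤ t ^ α / α := by gcongr; exact hα.1.le
      exact mul_le_mul_of_nonneg_right h4 (abs_nonneg _)
    have hmeas : AEStronglyMeasurable (fun τ => ∫ s in Ioc (0:ℝ) t,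
        ‖({p : ℝ × ℝ | p.2 ≤ p.1}.indicator
          (fun q => (q.1 - q.2) ^ (α - 1) * f' q.2) (s, τ))‖)
        (volume.restrict (Ioc 0 t)) :=
      (hsm.norm.integral_prod_left').aestronglyMeasurable
    refine Integrable.mono ((hf't.abs.const_mul (t ^ α / α))) hmeas ?_
    filter_upwards [ae_restrict_mem measurableSet_Ioc] with τ hτ
    have hnn : (0:ℝ) ≤ ∫ s in Ioc (0:ℝ) t, ‖({p : ℝ × ℝ | p.2 ≤ p.1}.indicator
        (fun q => (q.1 - q.2) ^ (α - 1) * f' q.2) (s, τ))‖ :=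
      integral_nonneg fun s => norm_nonneg _
    rw [Real.norm_of_nonneg hnn]
    refine (hb τ hτ).trans ?_
    exact le_abs_self _


lemma fubA {T α : ℝ} (hα : α ∈ Ioo (0:ℝ) 1) {f' : ℝ → ℝ} (hm : StronglyMeasurable f')
    (hf' : IntegrableOn f' (Icc 0 T)) {t : ℝ} (ht : t ∈ Icc (0:ℝ) T) :
    ∫ s in Ioc (0:ℝ) t, (∫ τ in Ioc (0:ℝ) s, (s - τ) ^ (α - 1) * f' τ)
      = ∫ τ in Ioc (0:ℝ) t, (t - τ) ^ α / α * f' τ := by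
  rw [triangle_swap (fun s τ => (s - τ) ^ (α - 1) * f' τ) (phiA_int hα hm hf' ht)]
  refine setIntegral_congr_fun measurableSet_Ioc fun τ hτ => ?_
  rw [MeasureTheory.integral_mul_const, rpow_int_eval hα.1 hτ.2]

lemma fubB {T α : ℝ} (hα : α ∈ Ioo (0:ℝ) 1) {f' : ℝ → ℝ} (hm : StronglyMeasurable f')
    (hf' : IntegrableOn f' (Icc 0 T)) {t : ℝ} (ht : t ∈ Icc (0:ℝ) T) :
    ∫ s in Ioc (0:ℝ) t, (t - s) ^ (α - 1) * (∫ τ in Ioc (0:ℝ) s, f' τ)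
      = ∫ τ in Ioc (0:ℝ) t, (t - τ) ^ α / α * f' τ := by
  have hsub : Ioc (0:ℝ) t ⊆ Icc 0 T := fun x hx => ⟨hx.1.le, hx.2.trans ht.2⟩
  have hf't : IntegrableOn f' (Ioc 0 t) := hf'.mono_set hsub
  have hS : MeasurableSet {p : ℝ × ℝ | p.2 ≤ p.1} :=
    measurableSet_le measurable_snd measurable_fst
  have hphiB : Integrable (fun p : ℝ × ℝ =>
      ({p : ℝ × ℝ | p.2 ≤ p.1}.indicator (fun q => (t - q.1) ^ (α - 1) * f' q.2) p))
      ((volume.restrict (Ioc 0 t)).prod (volume.restrict (Ioc 0 t))) :=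
    ((intOn_rpow_shift' hα.1 t).mul_prod hf't).indicator hS
  have h0 : ∀ s ∈ Ioc (0:ℝ) t, (t - s) ^ (α - 1) * (∫ τ in Ioc (0:ℝ) s, f' τ)
      = ∫ τ in Ioc (0:ℝ) s, (t - s) ^ (α - 1) * f' τ := fun s _ =>
    (MeasureTheory.integral_const_mul _ _).symm
  rw [setIntegral_congr_fun measurableSet_Ioc h0,
    triangle_swap (fun s τ => (t - s) ^ (α - 1) * f' τ) hphiB]
  refine setIntegral_congr_fun measurableSet_Ioc fun τ hτ => ?_
  rw [MeasureTheory.integral_mul_const, rpow_int_eval' hα.1 hτ.2, mul_comm ((t - τ) ^ α / α) (f' τ)]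

lemma core (T α : ℝ) (hT : 0 < T) (hα : α ∈ Ioo (0:ℝ) 1)
    (f f' : ℝ → ℝ) (hm : StronglyMeasurable f') (hf' : IntegrableOn f' (Icc 0 T))
    (hf : ∀ t ∈ Icc (0:ℝ) T, f t = f 0 + ∫ s in (0:ℝ)..t, f' s) :
    (∃ g : ℝ → ℝ, IntegrableOn g (Icc 0 T) ∧
        ∀ t ∈ Icc (0:ℝ) T,
          riemannLiouville α f t = riemannLiouville α f 0 + ∫ s in (0:ℝ)..t, g s) ∧
    (∀ᵐ t ∂(volume.restrict (Ioo (0:ℝ) T)),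
      HasDerivAt (riemannLiouville α f)
        (riemannLiouville α f' t + t ^ (α - 1) / Real.Gamma α * f 0) t) := by
  set g : ℝ → ℝ := fun s =>
    riemannLiouville α f' s + s ^ (α - 1) / Real.Gamma α * f 0 with hg_def
  -- basic facts
  have hRL0 : riemannLiouville α f 0 = 0 := by
    simp [riemannLiouville]
  have hRL' : ∀ s : ℝ, 0 ≤ s → riemannLiouville α f' s
      = (1 / Real.Gamma α) * ∫ τ in Ioc (0:ℝ) s, (s - τ) ^ (α - 1) * f' τ := by
    intro s hs
    rw [riemannLiouville, intervalIntegral.integral_of_le hs]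
  have hTmem : T ∈ Icc (0:ℝ) T := ⟨hT.le, le_refl T⟩
  -- integrability of the RL part of g
  have hΦT := phiA_int hα hm hf' hTmem
  have hg1' : IntegrableOn (fun s => riemannLiouville α f' s) (Ioc 0 T) := by
    have h1 := (hΦT.integral_prod_left).const_mul (1 / Real.Gamma α)
    refine h1.congr ?_
    filter_upwards [ae_restrict_mem measurableSet_Ioc] with s hs
    rw [hRL' s hs.1.le, slice_eq (fun s τ => (s - τ) ^ (α - 1) * f' τ) hs]
  have hpow_int : IntegrableOn (fun s : ℝ => s ^ (α - 1) / Real.Gamma α * f 0) (Ioc 0 T) := by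
    have h1 : IntervalIntegrable (fun x : ℝ => x ^ (α - 1)) volume 0 T :=
      intervalIntegrable_rpow' (by linarith [hα.1])
    exact (h1.1.div_const _).mul_const _
  have hg_int : IntegrableOn g (Icc 0 T) := by
    rw [integrableOn_Icc_iff_integrableOn_Ioc]
    exact hg1'.add hpow_int
  -- value of ∫ s in Ioc 0 t, s ^ (α - 1)
  have hpow_eval : ∀ t : ℝ, 0 ≤ t → ∫ s in Ioc (0:ℝ) t, s ^ (α - 1) = t ^ α / α := by
    intro t ht
    have := rpow_int_eval hα.1 (τ := 0) (t := t) ht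
    simpa [integral_Icc_eq_integral_Ioc] using this
  have hpow_eval' : ∀ t : ℝ, 0 ≤ t → ∫ τ in Ioc (0:ℝ) t, (t - τ) ^ (α - 1) = t ^ α / α := by
    intro t ht
    have := rpow_int_eval' hα.1 (τ := 0) (t := t) ht
    simpa [integral_Icc_eq_integral_Ioc] using this
  -- the primitive of f'
  set P : ℝ → ℝ := fun x => ∫ s in Ioc (0:ℝ) x, f' s with hP_def
  have hPc : ContinuousOn P (Icc 0 T) := intervalIntegral.continuousOn_primitive hf'
  have hCbd : ∀ x ∈ Icc (0:ℝ) T, |P x| ≤ ∫ s in Icc (0:ℝ) T, ‖f' s‖ := by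
    intro x hx
    have h1 : |P x| ≤ ∫ s in Ioc (0:ℝ) x, ‖f' s‖ := by
      rw [← Real.norm_eq_abs]
      exact norm_integral_le_integral_norm _
    refine h1.trans ?_
    refine setIntegral_mono_set hf'.norm ?_ ?_
    · exact Eventually.of_forall fun s => norm_nonneg _
    · exact HasSubset.Subset.eventuallyLE fun s hs => ⟨hs.1.le, hs.2.trans hx.2⟩
  -- main representation
  have repr : ∀ t ∈ Icc (0:ℝ) T, riemannLiouville α f t
      = (1 / Real.Gamma α) * (f 0 * (t ^ α / α)
        + ∫ τ in Ioc (0:ℝ) t, (t - τ) ^ α / α * f' τ) := by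
    intro t ht
    have hsub : Ioc (0:ℝ) t ⊆ Icc 0 T := fun x hx => ⟨hx.1.le, hx.2.trans ht.2⟩
    rw [riemannLiouville, intervalIntegral.integral_of_le ht.1]
    congr 1
    have h1 : ∀ τ ∈ Ioc (0:ℝ) t, (t - τ) ^ (α - 1) * f τ
        = (t - τ) ^ (α - 1) * f 0 + (t - τ) ^ (α - 1) * P τ := by
      intro τ hτ
      rw [hf τ (hsub hτ), intervalIntegral.integral_of_le hτ.1.le, mul_add]
    rw [setIntegral_congr_fun measurableSet_Ioc h1]
    have hi1 : IntegrableOn (fun τ => (t - τ) ^ (α - 1) * f 0) (Ioc 0 t) :=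
      (intOn_rpow_shift' hα.1 t).mul_const _
    have hi2 : IntegrableOn (fun τ => (t - τ) ^ (α - 1) * P τ) (Ioc 0 t) := by
      set C : ℝ := ∫ s in Icc (0:ℝ) T, ‖f' s‖ with hC
      refine Integrable.mono ((intOn_rpow_shift' hα.1 t).mul_const C).norm ?_ ?_
      · have hk : Measurable fun τ : ℝ => (t - τ) ^ (α - 1) := by fun_prop
        exact (hk.aestronglyMeasurable).mul
          (((hPc.mono hsub).aestronglyMeasurable measurableSet_Ioc))
      · filter_upwards [ae_restrict_mem measurableSet_Ioc] with τ hτ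
        rw [norm_mul, norm_norm, norm_mul]
        refine mul_le_mul_of_nonneg_left ?_ (norm_nonneg _)
        have h2 := hCbd τ (hsub hτ)
        rw [Real.norm_eq_abs, Real.norm_eq_abs]
        exact h2.trans (le_abs_self _)
    rw [integral_add hi1 hi2, MeasureTheory.integral_mul_const, hpow_eval' t ht.1, mul_comm (t ^ α / α) (f 0)]
    congr 1
    exact fubB hα hm hf' ht
  -- value of ∫ 0..t g
  have hg_eq : ∀ t ∈ Icc (0:ℝ) T, ∫ s in (0:ℝ)..t, g s
      = (1 / Real.Gamma α) * (f 0 * (t ^ α / α)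
        + ∫ τ in Ioc (0:ℝ) t, (t - τ) ^ α / α * f' τ) := by
    intro t ht
    have hsub : Ioc (0:ℝ) t ⊆ Icc 0 T := fun x hx => ⟨hx.1.le, hx.2.trans ht.2⟩
    have hsub2 : Ioc (0:ℝ) t ⊆ Ioc (0:ℝ) T := Ioc_subset_Ioc le_rfl ht.2
    rw [intervalIntegral.integral_of_le ht.1]
    have hsplit : ∫ s in Ioc (0:ℝ) t, g s
        = (∫ s in Ioc (0:ℝ) t, riemannLiouville α f' s)
          + ∫ s in Ioc (0:ℝ) t, s ^ (α - 1) / Real.Gamma α * f 0 :=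
      integral_add (hg1'.mono_set hsub2) (hpow_int.mono_set hsub2)
    rw [hsplit]
    have h1 : ∫ s in Ioc (0:ℝ) t, riemannLiouville α f' s
        = (1 / Real.Gamma α) * ∫ τ in Ioc (0:ℝ) t, (t - τ) ^ α / α * f' τ := by
      have h2 : ∀ s ∈ Ioc (0:ℝ) t, riemannLiouville α f' s
          = (1 / Real.Gamma α) * ∫ τ in Ioc (0:ℝ) s, (s - τ) ^ (α - 1) * f' τ :=
        fun s hs => hRL' s hs.1.le
      rw [setIntegral_congr_fun measurableSet_Ioc h2, MeasureTheory.integral_const_mul]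
      congr 1
      exact fubA hα hm hf' ht
    have h3 : ∫ s in Ioc (0:ℝ) t, s ^ (α - 1) / Real.Gamma α * f 0
        = t ^ α / α / Real.Gamma α * f 0 := by
      have : ∀ s : ℝ, s ^ (α - 1) / Real.Gamma α * f 0
          = s ^ (α - 1) * (f 0 / Real.Gamma α) := by
        intro s; ring
      simp only [this]
      rw [MeasureTheory.integral_mul_const, hpow_eval t ht.1]
      ring
    rw [h1, h3]
    ring
  constructor
  · refine ⟨g, hg_int, fun t ht => ?_⟩
    rw [hRL0, zero_add, repr t ht, hg_eq t ht]
  · -- derivative part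
    set G : ℝ → ℝ := (Icc (0:ℝ) T).indicator g with hG_def
    have hGint : Integrable G := (integrable_indicator_iff measurableSet_Icc).2 hg_int
    filter_upwards [ae_restrict_mem measurableSet_Ioo,
      ae_restrict_of_ae (ae_hasDerivAt_primitive hGint)] with x hx hder
    have hxIcc : x ∈ Icc (0:ℝ) T := ⟨hx.1.le, hx.2.le⟩
    have hGx : G x = g x := Set.indicator_of_mem hxIcc g
    have hev : riemannLiouville α f =ᶠ[nhds x] (fun u => ∫ s in (0:ℝ)..u, G s) := by
      filter_upwards [isOpen_Ioo.mem_nhds hx] with u hu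
      have huIcc : u ∈ Icc (0:ℝ) T := ⟨hu.1.le, hu.2.le⟩
      have h1 : riemannLiouville α f u = ∫ s in (0:ℝ)..u, g s := by
        rw [(repr u huIcc), ← hg_eq u huIcc]
      rw [h1, intervalIntegral.integral_of_le hu.1.le,
        intervalIntegral.integral_of_le hu.1.le]
      refine setIntegral_congr_fun measurableSet_Ioc fun s hs => ?_
      have hsm : s ∈ Icc (0:ℝ) T := ⟨hs.1.le, hs.2.trans hu.2.le⟩
      exact (Set.indicator_of_mem hsm g).symm
    have hder2 : HasDerivAt (riemannLiouville α f) (G x) x :=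
      hder.congr_of_eventuallyEq hev
    rw [hGx] at hder2
    exact hder2

end RLaux

theorem rl_of_ac_is_ac (T α : ℝ) (hT : 0 < T) (hα : α ∈ Ioo (0:ℝ) 1)
    (f f' : ℝ → ℝ) (hf' : IntegrableOn f' (Icc 0 T))
    (hf : ∀ t ∈ Icc (0:ℝ) T, f t = f 0 + ∫ s in (0:ℝ)..t, f' s) :
    (∃ g : ℝ → ℝ, IntegrableOn g (Icc 0 T) ∧
        ∀ t ∈ Icc (0:ℝ) T,
          riemannLiouville α f t = riemannLiouville α f 0 + ∫ s in (0:ℝ)..t, g s) ∧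
    (∀ᵐ t ∂(volume.restrict (Ioo (0:ℝ) T)),
      HasDerivAt (riemannLiouville α f)
        (riemannLiouville α f' t + t ^ (α - 1) / Real.Gamma α * f 0) t) := by
  set F' : ℝ → ℝ := (hf'.1.mk f') with hF'_def
  have hFm : StronglyMeasurable F' := hf'.1.stronglyMeasurable_mk
  have haeq : f' =ᵐ[volume.restrict (Icc 0 T)] F' := hf'.1.ae_eq_mk
  have hF'int : IntegrableOn F' (Icc 0 T) := hf'.congr haeq
  have haeq_t : ∀ t ∈ Icc (0:ℝ) T, f' =ᵐ[volume.restrict (Ioc 0 t)] F' := by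
    intro t ht
    exact ae_restrict_of_ae_restrict_of_subset
      (fun x (hx : x ∈ Ioc (0:ℝ) t) => (⟨hx.1.le, hx.2.trans ht.2⟩ : x ∈ Icc (0:ℝ) T)) haeq
  have hF : ∀ t ∈ Icc (0:ℝ) T, f t = f 0 + ∫ s in (0:ℝ)..t, F' s := by
    intro t ht
    rw [hf t ht, intervalIntegral.integral_of_le ht.1, intervalIntegral.integral_of_le ht.1,
      integral_congr_ae (haeq_t t ht)]
  obtain ⟨h1, h2⟩ := RLaux.core T α hT hα f F' hFm hF'int hF
  refine ⟨h1, ?_⟩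
  filter_upwards [h2, ae_restrict_mem measurableSet_Ioo] with t ht hmem
  have hRLeq : riemannLiouville α f' t = riemannLiouville α F' t := by
    rw [riemannLiouville, riemannLiouville,
      intervalIntegral.integral_of_le hmem.1.le, intervalIntegral.integral_of_le hmem.1.le]
    congr 1
    refine integral_congr_ae ?_
    filter_upwards [haeq_t t ⟨hmem.1.le, hmem.2.le⟩] with τ hτ
    rw [hτ]
  rw [hRLeq]
  exact ht
end

section
/- Assume α ∈ (0,1), f : [0,T] → ℝ is absolutely continuous, and t ↦ t^{1-α} f'(t) is essentially bounded on (0,T). Then there is a constant C₀ depending only on α such that for all 0 ≤ t₁ ≤ t₂ ≤ T, |t₂^{1-α} (I^α f')(t₂) − t₁^{1-α} (I^α f')(t₁)| ≤ C₀ ‖t^{1-α} f'‖_{L^∞(0,T)} |t₂ − t₁|^α. In particular, t ↦ t^{1-α} (I^α f')(t) is α-Hölder continuous on [0,T]. -/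
open MeasureTheory Set intervalIntegral

lemma slope_rpow {x y p : ℝ} (hx : 0 < x) (hxy : x < y) :
    ∃ c ∈ Ioo x y, y ^ p - x ^ p = (y - x) * (p * c ^ (p - 1)) := by
  have hcont : ContinuousOn (fun z : ℝ => z ^ p) (Icc x y) := by
    intro z hz
    exact (Real.continuousAt_rpow_const z p (Or.inl (ne_of_gt (lt_of_lt_of_le hx hz.1)))).continuousWithinAt
  have hderiv : ∀ z ∈ Ioo x y, HasDerivAt (fun z : ℝ => z ^ p) (p * z ^ (p - 1)) z := by
    intro z hz
    exact Real.hasDerivAt_rpow_const (Or.inl (ne_of_gt (lt_trans hx hz.1)))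
  obtain ⟨c, hc, hceq⟩ := exists_hasDerivAt_eq_slope (fun z : ℝ => z ^ p)
    (fun z => p * z ^ (p - 1)) hxy hcont hderiv
  refine ⟨c, hc, ?_⟩
  rw [hceq]
  have hne : y - x ≠ 0 := by linarith
  field_simp

/-- subadditivity of rpow for exponent in (0,1] -/
lemma rpow_add_le {x d p : ℝ} (hx : 0 ≤ x) (hd : 0 ≤ d) (hp : 0 < p) (hp1 : p ≤ 1) :
    (x + d) ^ p ≤ x ^ p + d ^ p := by
  rcases eq_or_lt_of_le hx with h | hx'
  · simp [← h, Real.rpow_natCast]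
    positivity
  rcases eq_or_lt_of_le hd with h | hd'
  · simp [← h]
    positivity
  have hs : 0 < x + d := by linarith
  have key : ∀ u : ℝ, 0 < u → u ≤ 1 → u ≤ u ^ p := by
    intro u hu hu1
    calc u = u ^ (1:ℝ) := (Real.rpow_one u).symm
    _ ≤ u ^ p := Real.rpow_le_rpow_of_exponent_ge hu hu1 hp1
  have hx1 : x / (x + d) ≤ 1 := by rw [div_le_one hs]; linarith
  have hd1 : d / (x + d) ≤ 1 := by rw [div_le_one hs]; linarith
  have h1 : x / (x + d) + d / (x + d) ≤ (x / (x + d)) ^ p + (d / (x + d)) ^ p :=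
    add_le_add (key _ (by positivity) hx1) (key _ (by positivity) hd1)
  have h2 : x / (x + d) + d / (x + d) = 1 := by field_simp
  rw [h2] at h1
  have h3 : (x / (x + d)) ^ p = x ^ p / (x + d) ^ p := Real.div_rpow hx hs.le p
  have h4 : (d / (x + d)) ^ p = d ^ p / (x + d) ^ p := Real.div_rpow hd hs.le p
  rw [h3, h4, ← add_div, le_div_iff₀ (Real.rpow_pos_of_pos hs p), one_mul] at h1
  exact h1

lemma int_sub_rpow {a b c r : ℝ} (hr : -1 < r) :
    ∫ τ in a..b, (c - τ) ^ r = ((c - a) ^ (r + 1) - (c - b) ^ (r + 1)) / (r + 1) := by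
  rw [intervalIntegral.integral_comp_sub_left (fun x : ℝ => x ^ r) c,
    integral_rpow (Or.inl hr)]

lemma intInt_sub_rpow {p q c r : ℝ} (hr : -1 < r) :
    IntervalIntegrable (fun τ => (c - τ) ^ r) volume p q := by
  have := (intervalIntegrable_rpow' (a := c - p) (b := c - q) hr).comp_sub_left c
  simpa using this

/-- Workhorse: estimate a weighted integral of `f'` by an integrable dominating function. -/
lemma key_est {α T M : ℝ} (hα : α ∈ Ioo (0:ℝ) 1) {f' : ℝ → ℝ}
    (hint : IntegrableOn f' (Icc 0 T))
    (hM : ∀ᵐ t ∂(volume.restrict (Ioo (0:ℝ) T)), |t ^ (1 - α) * f' t| ≤ M)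
    {p q : ℝ} (hp : 0 ≤ p) (hpq : p ≤ q) (hqT : q ≤ T)
    (w g : ℝ → ℝ) (hw : AEStronglyMeasurable w (volume.restrict (Ioc p q)))
    (hg : IntervalIntegrable g volume p q)
    (hdom : ∀ τ ∈ Ioo p q, |w τ| * (M * τ ^ (α - 1)) ≤ g τ) :
    IntervalIntegrable (fun τ => w τ * f' τ) volume p q ∧
      |∫ τ in p..q, w τ * f' τ| ≤ ∫ τ in p..q, g τ := by
  have hres : volume.restrict (Ioo p q) = volume.restrict (Ioc p q) :=
    Measure.restrict_congr_set Ioo_ae_eq_Ioc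
  have hsub : Ioc p q ⊆ Icc (0:ℝ) T := fun τ hτ => ⟨le_of_lt (lt_of_le_of_lt hp hτ.1), hτ.2.trans hqT⟩
  have hf'meas : AEStronglyMeasurable f' (volume.restrict (Ioc p q)) :=
    hint.aestronglyMeasurable.mono_measure (Measure.restrict_mono hsub le_rfl)
  -- a.e. bound |f' τ| ≤ M * τ^(α-1) on Ioc p q
  have h3 : ∀ᵐ τ ∂volume, τ ∈ Ioo (0:ℝ) T → |τ ^ (1 - α) * f' τ| ≤ M :=
    (ae_restrict_iff' measurableSet_Ioo).mp hM
  have h4 : ∀ᵐ τ ∂volume.restrict (Ioc p q), τ ∈ Ioo (0:ℝ) T → |τ ^ (1 - α) * f' τ| ≤ M :=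
    h3.filter_mono (ae_mono Measure.restrict_le_self)
  have h5 : ∀ᵐ τ ∂volume.restrict (Ioc p q), τ ∈ Ioo p q := by
    rw [← hres]; exact ae_restrict_mem measurableSet_Ioo
  have hbd : ∀ᵐ τ ∂volume.restrict (Ioc p q), ‖w τ * f' τ‖ ≤ g τ := by
    filter_upwards [h4, h5] with τ h4τ h5τ
    have hτ0 : 0 < τ := lt_of_le_of_lt hp h5τ.1
    have hτT : τ < T := lt_of_lt_of_le h5τ.2 hqT
    have hbf : |f' τ| ≤ M * τ ^ (α - 1) := by
      have h6 : |τ ^ (1 - α) * f' τ| ≤ M := h4τ ⟨hτ0, hτT⟩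
      have h7 : τ ^ (α - 1) * τ ^ (1 - α) = 1 := by
        rw [← Real.rpow_add hτ0]; norm_num
      calc |f' τ| = |(τ ^ (α - 1) * τ ^ (1 - α)) * f' τ| := by rw [h7, one_mul]
      _ = τ ^ (α - 1) * |τ ^ (1 - α) * f' τ| := by
          rw [mul_assoc, abs_mul, abs_of_nonneg (Real.rpow_nonneg hτ0.le _)]
      _ ≤ τ ^ (α - 1) * M := by
          exact mul_le_mul_of_nonneg_left h6 (Real.rpow_nonneg hτ0.le _)
      _ = M * τ ^ (α - 1) := mul_comm _ _
    calc ‖w τ * f' τ‖ = |w τ| * |f' τ| := abs_mul _ _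
    _ ≤ |w τ| * (M * τ ^ (α - 1)) := mul_le_mul_of_nonneg_left hbf (abs_nonneg _)
    _ ≤ g τ := hdom τ h5τ
  have hgint : IntegrableOn g (Ioc p q) :=
    (intervalIntegrable_iff_integrableOn_Ioc_of_le hpq).mp hg
  have hwint : Integrable (fun τ => w τ * f' τ) (volume.restrict (Ioc p q)) :=
    hgint.mono' (hw.mul hf'meas) hbd
  refine ⟨(intervalIntegrable_iff_integrableOn_Ioc_of_le hpq).mpr hwint, ?_⟩
  rw [intervalIntegral.integral_of_le hpq, intervalIntegral.integral_of_le hpq]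
  calc |∫ τ in Ioc p q, w τ * f' τ| ≤ ∫ τ in Ioc p q, |w τ * f' τ| := by
        simpa only [← Real.norm_eq_abs] using
          MeasureTheory.norm_integral_le_integral_norm (μ := volume.restrict (Ioc p q)) _
  _ ≤ ∫ τ in Ioc p q, g τ := integral_mono_ae hwint.abs hgint hbd

/-- `x^p - y^p ≤ (-p) (y-x) x^(p-1)` for negative exponent. -/
lemma rpow_diff_le {x y p : ℝ} (hx : 0 < x) (hxy : x ≤ y) (hp : p < 0) :
    x ^ p - y ^ p ≤ (-p) * (y - x) * x ^ (p - 1) := by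
  rcases eq_or_lt_of_le hxy with h | hxy'
  · rw [h]; simp
  obtain ⟨c, hc, hceq⟩ := slope_rpow (p := p) hx hxy'
  have h1 : x ^ p - y ^ p = (y - x) * ((-p) * c ^ (p - 1)) := by rw [← neg_sub (y^p), hceq]; ring
  rw [h1]
  have h2 : c ^ (p - 1) ≤ x ^ (p - 1) :=
    Real.rpow_le_rpow_of_nonpos hx hc.1.le (by linarith)
  have := mul_le_mul_of_nonneg_left h2 (by linarith [hc.1, hx] : (0:ℝ) ≤ -p)
  calc (y - x) * ((-p) * c ^ (p-1)) ≤ (y - x) * ((-p) * x ^ (p-1)) :=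
        mul_le_mul_of_nonneg_left this (by linarith)
  _ = (-p) * (y - x) * x ^ (p - 1) := by ring

/-- `y^p - x^p ≤ p (y-x) x^(p-1)` for exponent in (0,1]. -/
lemma rpow_diff_le' {x y p : ℝ} (hx : 0 < x) (hxy : x ≤ y) (hp : 0 < p) (hp1 : p ≤ 1) :
    y ^ p - x ^ p ≤ p * (y - x) * x ^ (p - 1) := by
  rcases eq_or_lt_of_le hxy with h | hxy'
  · rw [h]; simp
  obtain ⟨c, hc, hceq⟩ := slope_rpow (p := p) hx hxy'
  rw [hceq]
  have h2 : c ^ (p - 1) ≤ x ^ (p - 1) :=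
    Real.rpow_le_rpow_of_nonpos hx hc.1.le (by linarith)
  calc (y - x) * (p * c ^ (p-1)) ≤ (y - x) * (p * x ^ (p-1)) :=
        mul_le_mul_of_nonneg_left (mul_le_mul_of_nonneg_left h2 hp.le) (by linarith)
  _ = p * (y - x) * x ^ (p - 1) := by ring

/-- `d * t^(α-1) ≤ d^α` when `0 < d ≤ t`, `α ≤ 1`. -/
lemma delta_bound {d t a : ℝ} (hd : 0 < d) (hdt : d ≤ t) (ha : 0 < a) (ha1 : a ≤ 1) :
    d * t ^ (a - 1) ≤ d ^ a := by
  have ht : 0 < t := lt_of_lt_of_le hd hdt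
  have h1 : t ^ (a - 1) ≤ d ^ (a - 1) := Real.rpow_le_rpow_of_nonpos hd hdt (by linarith)
  calc d * t ^ (a - 1) ≤ d * d ^ (a - 1) := mul_le_mul_of_nonneg_left h1 hd.le
  _ = d ^ (1:ℝ) * d ^ (a - 1) := by rw [Real.rpow_one]
  _ = d ^ a := by rw [← Real.rpow_add hd]; ring_nf

section Est

variable {α T M : ℝ} {f' : ℝ → ℝ}

/-- Estimate with dominator `c * M * τ^(α-1)`. -/
lemma est1 (hα : α ∈ Ioo (0:ℝ) 1)
    (hint : IntegrableOn f' (Icc 0 T))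
    (hM : ∀ᵐ t ∂(volume.restrict (Ioo (0:ℝ) T)), |t ^ (1 - α) * f' t| ≤ M)
    (hM0 : 0 ≤ M)
    {p q : ℝ} (hp : 0 ≤ p) (hpq : p ≤ q) (hqT : q ≤ T)
    {w : ℝ → ℝ} (hw : AEStronglyMeasurable w (volume.restrict (Ioc p q)))
    {c : ℝ} (hc : 0 ≤ c) (hdom : ∀ τ ∈ Ioo p q, |w τ| ≤ c) :
    IntervalIntegrable (fun τ => w τ * f' τ) volume p q ∧
      |∫ τ in p..q, w τ * f' τ| ≤ c * M * ((q ^ α - p ^ α) / α) := by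
  have hα' : (-1:ℝ) < α - 1 := by have := hα.1; linarith
  have hg : IntervalIntegrable (fun τ => c * M * τ ^ (α - 1)) volume p q :=
    (intervalIntegrable_rpow' hα').const_mul _
  have h := key_est hα hint hM hp hpq hqT w (fun τ => c * M * τ ^ (α - 1)) hw hg ?_
  · refine ⟨h.1, h.2.trans_eq ?_⟩
    rw [intervalIntegral.integral_const_mul, integral_rpow (Or.inl hα')]
    norm_num
  · intro τ hτ
    have hτ0 : 0 < τ := lt_of_le_of_lt hp hτ.1
    have : |w τ| * (M * τ ^ (α - 1)) ≤ c * (M * τ ^ (α - 1)) :=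
      mul_le_mul_of_nonneg_right (hdom τ hτ) (by positivity)
    calc |w τ| * (M * τ ^ (α - 1)) ≤ c * (M * τ ^ (α - 1)) := this
    _ = c * M * τ ^ (α - 1) := by ring

/-- Estimate with dominator `c * M * (t-τ)^(α-1)`. -/
lemma est2 (hα : α ∈ Ioo (0:ℝ) 1)
    (hint : IntegrableOn f' (Icc 0 T))
    (hM : ∀ᵐ t ∂(volume.restrict (Ioo (0:ℝ) T)), |t ^ (1 - α) * f' t| ≤ M)
    (hM0 : 0 ≤ M)
    {p q t : ℝ} (hp : 0 ≤ p) (hpq : p ≤ q) (hqT : q ≤ T)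
    {w : ℝ → ℝ} (hw : AEStronglyMeasurable w (volume.restrict (Ioc p q)))
    {c : ℝ} (hc : 0 ≤ c)
    (hdom : ∀ τ ∈ Ioo p q, |w τ| * τ ^ (α - 1) ≤ c * (t - τ) ^ (α - 1)) :
    IntervalIntegrable (fun τ => w τ * f' τ) volume p q ∧
      |∫ τ in p..q, w τ * f' τ| ≤ c * M * (((t - p) ^ α - (t - q) ^ α) / α) := by
  have hα' : (-1:ℝ) < α - 1 := by have := hα.1; linarith
  have hg : IntervalIntegrable (fun τ => c * M * (t - τ) ^ (α - 1)) volume p q :=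
    (intInt_sub_rpow hα').const_mul _
  have h := key_est hα hint hM hp hpq hqT w (fun τ => c * M * (t - τ) ^ (α - 1)) hw hg ?_
  · refine ⟨h.1, h.2.trans_eq ?_⟩
    rw [intervalIntegral.integral_const_mul, int_sub_rpow hα']
    norm_num
  · intro τ hτ
    have hτ0 : 0 < τ := lt_of_le_of_lt hp hτ.1
    calc |w τ| * (M * τ ^ (α - 1)) = M * (|w τ| * τ ^ (α - 1)) := by ring
    _ ≤ M * (c * (t - τ) ^ (α - 1)) := mul_le_mul_of_nonneg_left (hdom τ hτ) hM0
    _ = c * M * (t - τ) ^ (α - 1) := by ring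

/-- Estimate with dominator `c * M * (t-τ)^(α-2)`, where `q < t`. -/
lemma est3 (hα : α ∈ Ioo (0:ℝ) 1)
    (hint : IntegrableOn f' (Icc 0 T))
    (hM : ∀ᵐ t ∂(volume.restrict (Ioo (0:ℝ) T)), |t ^ (1 - α) * f' t| ≤ M)
    (hM0 : 0 ≤ M)
    {p q t : ℝ} (hp : 0 ≤ p) (hpq : p ≤ q) (hqT : q ≤ T) (hqt : q < t)
    {w : ℝ → ℝ} (hw : AEStronglyMeasurable w (volume.restrict (Ioc p q)))
    {c : ℝ} (hc : 0 ≤ c)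
    (hdom : ∀ τ ∈ Ioo p q, |w τ| * τ ^ (α - 1) ≤ c * (t - τ) ^ (α - 2)) :
    IntervalIntegrable (fun τ => w τ * f' τ) volume p q ∧
      |∫ τ in p..q, w τ * f' τ| ≤
        c * M * (((t - q) ^ (α - 1) - (t - p) ^ (α - 1)) / (1 - α)) := by
  have hα1 := hα.1; have hα2 := hα.2
  have h0q : (0:ℝ) < t - q := by linarith
  have h0p : (0:ℝ) < t - p := by linarith
  have hne : (0:ℝ) ∉ uIcc (t - p) (t - q) := by
    rw [mem_uIcc]; push_neg
    constructor <;> intro h <;> linarith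
  have hgi : IntervalIntegrable (fun x : ℝ => x ^ (α - 2)) volume (t - p) (t - q) :=
    intervalIntegrable_rpow (Or.inr hne)
  have hg : IntervalIntegrable (fun τ => c * M * (t - τ) ^ (α - 2)) volume p q := by
    have := (hgi.comp_sub_left t).const_mul (c * M)
    simpa using this
  have h := key_est hα hint hM hp hpq hqT w (fun τ => c * M * (t - τ) ^ (α - 2)) hw hg ?_
  · refine ⟨h.1, h.2.trans_eq ?_⟩
    rw [intervalIntegral.integral_const_mul,
      intervalIntegral.integral_comp_sub_left (fun x : ℝ => x ^ (α - 2)) t,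
      integral_rpow (Or.inr ⟨by intro h; linarith, by rwa [uIcc_comm]⟩)]
    have he : α - 2 + 1 = α - 1 := by ring
    rw [he]
    congr 1
    have h1 : α - 1 ≠ 0 := sub_ne_zero.mpr (ne_of_lt hα2)
    have h2 : 1 - α ≠ 0 := sub_ne_zero.mpr (ne_of_gt hα2)
    field_simp
    ring
  · intro τ hτ
    have hτ0 : 0 < τ := lt_of_le_of_lt hp hτ.1
    calc |w τ| * (M * τ ^ (α - 1)) = M * (|w τ| * τ ^ (α - 1)) := by ring
    _ ≤ M * (c * (t - τ) ^ (α - 2)) := mul_le_mul_of_nonneg_left (hdom τ hτ) hM0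
    _ = c * M * (t - τ) ^ (α - 2) := by ring

end Est

lemma half_rpow {t : ℝ} (ht : 0 < t) (s : ℝ) : (t / 2) ^ s = 2 ^ (-s) * t ^ s := by
  rw [div_eq_mul_inv, Real.mul_rpow ht.le (by norm_num), Real.inv_rpow (by norm_num),
    ← Real.rpow_neg (by norm_num)]
  ring

lemma two_rpow_le {s : ℝ} (hs : s ≤ 1) : (2:ℝ) ^ s ≤ 2 := by
  calc (2:ℝ) ^ s ≤ 2 ^ (1:ℝ) := Real.rpow_le_rpow_of_exponent_le one_le_two hs
  _ = 2 := Real.rpow_one 2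

lemma two_rpow_le' {s : ℝ} (hs : s ≤ 2) : (2:ℝ) ^ s ≤ 4 := by
  calc (2:ℝ) ^ s ≤ 2 ^ (2:ℝ) := Real.rpow_le_rpow_of_exponent_le one_le_two hs
  _ = 4 := by
      rw [show (2:ℝ) = ((2:ℕ):ℝ) by norm_num, Real.rpow_natCast]
      norm_num

lemma kernel_meas {α : ℝ} (c p q : ℝ) :
    AEStronglyMeasurable (fun τ => (c - τ) ^ (α - 1)) (volume.restrict (Ioc p q)) :=
  ((measurable_id.const_sub c).pow_const (α - 1)).aestronglyMeasurable

section Terms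

variable {α T M t₁ t₂ : ℝ} {f' : ℝ → ℝ}

lemma div_mono_num {x y a : ℝ} (ha : 0 < a) (h : x ≤ y) : x / a ≤ y / a := by gcongr

lemma termA (hα : α ∈ Ioo (0:ℝ) 1)
    (hint : IntegrableOn f' (Icc 0 T))
    (hM : ∀ᵐ t ∂(volume.restrict (Ioo (0:ℝ) T)), |t ^ (1 - α) * f' t| ≤ M)
    (hM0 : 0 ≤ M) (ht₁ : 0 ≤ t₁) (h12 : t₁ < t₂) (ht₂T : t₂ ≤ T) :
    IntervalIntegrable (fun τ => (t₂ - τ) ^ (α - 1) * f' τ) volume t₁ t₂ ∧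
      t₂ ^ (1 - α) * |∫ τ in t₁..t₂, (t₂ - τ) ^ (α - 1) * f' τ| ≤
        8 / α * (M * (t₂ - t₁) ^ α) := by
  obtain ⟨hα0, hα1⟩ := hα
  set δ := t₂ - t₁ with hδdef
  have hδ : 0 < δ := by rw [hδdef]; linarith
  have ht₂0 : 0 < t₂ := lt_of_le_of_lt ht₁ h12
  set m := t₂ / 2 with hmdef
  have hm0 : 0 < m := by positivity
  have hmt₂ : m ≤ t₂ := by rw [hmdef]; linarith
  have habs : ∀ τ : ℝ, τ < t₂ → |(t₂ - τ) ^ (α - 1)| = (t₂ - τ) ^ (α - 1) := fun τ hτ =>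
    abs_of_nonneg (Real.rpow_nonneg (by linarith) _)
  have ht₂pow : 0 ≤ t₂ ^ (1 - α) := Real.rpow_nonneg ht₂0.le _
  have hδpow : 0 ≤ δ ^ α := Real.rpow_nonneg hδ.le _
  have hF1 : m ^ (α - 1) * m ^ α = m ^ (2 * α - 1) := by
    rw [← Real.rpow_add hm0]; ring_nf
  by_cases hcase : t₂ ≤ 2 * δ
  · -- t₂ ≤ 2δ : split at m
    have ht₁m : t₁ ≤ m := by rw [hmdef]; rw [hδdef] at hcase; linarith
    have e1 := est1 ⟨hα0, hα1⟩ hint hM hM0 ht₁ ht₁m (by linarith)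
      (kernel_meas t₂ t₁ m) (Real.rpow_nonneg hm0.le (α - 1))
      (fun τ hτ => by
        have h2 : τ < m := hτ.2
        rw [habs τ (by linarith)]
        refine Real.rpow_le_rpow_of_nonpos hm0 (by rw [hmdef] at h2 ⊢; linarith)
          (by linarith))
    have e2 := est2 (t := t₂) ⟨hα0, hα1⟩ hint hM hM0 (le_of_lt hm0)
      hmt₂ ht₂T (kernel_meas t₂ m t₂) (Real.rpow_nonneg hm0.le (α - 1))
      (fun τ hτ => by
        rw [habs τ hτ.2, mul_comm]
        exact mul_le_mul_of_nonneg_right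
          (Real.rpow_le_rpow_of_nonpos hm0 hτ.1.le (by linarith))
          (Real.rpow_nonneg (by linarith [hτ.2]) _))
    refine ⟨e1.1.trans e2.1, ?_⟩
    have hsplit := intervalIntegral.integral_add_adjacent_intervals e1.1 e2.1
    have step1 : |∫ τ in t₁..m, (t₂ - τ) ^ (α - 1) * f' τ| ≤ M * m ^ (2*α - 1) / α := by
      refine e1.2.trans ?_
      have hb : (m ^ α - t₁ ^ α) / α ≤ m ^ α / α :=
        div_mono_num hα0 (sub_le_self _ (Real.rpow_nonneg ht₁ _))
      calc m ^ (α-1) * M * ((m ^ α - t₁ ^ α) / α) ≤ m ^ (α-1) * M * (m ^ α / α) :=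
            mul_le_mul_of_nonneg_left hb (mul_nonneg (Real.rpow_nonneg hm0.le _) hM0)
      _ = M * m ^ (2*α - 1) / α := by rw [← hF1]; ring
    have step2 : |∫ τ in m..t₂, (t₂ - τ) ^ (α - 1) * f' τ| ≤ M * m ^ (2*α - 1) / α := by
      refine e2.2.trans ?_
      rw [show t₂ - t₂ = (0:ℝ) by ring, show t₂ - m = m from by rw [hmdef]; ring,
        Real.zero_rpow (ne_of_gt hα0), sub_zero, ← hF1]
      exact le_of_eq (by ring)
    have hcomb : t₂ ^ (1 - α) * m ^ (2*α - 1) ≤ 4 * δ ^ α := by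
      have h2a : m ^ (2*α - 1) = 2 ^ (1 - 2*α) * t₂ ^ (2*α - 1) := by
        rw [hmdef, half_rpow ht₂0, show -(2*α - 1) = 1 - 2*α by ring]
      have h2b : t₂ ^ (1 - α) * t₂ ^ (2*α - 1) = t₂ ^ α := by
        rw [← Real.rpow_add ht₂0]; ring_nf
      have h2c : t₂ ^ α ≤ 2 * δ ^ α := by
        calc t₂ ^ α ≤ (2 * δ) ^ α := Real.rpow_le_rpow ht₂0.le hcase hα0.le
        _ = 2 ^ α * δ ^ α := Real.mul_rpow (by norm_num) hδ.le
        _ ≤ 2 * δ ^ α := mul_le_mul_of_nonneg_right (two_rpow_le hα1.le) hδpow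
      calc t₂ ^ (1 - α) * m ^ (2*α - 1) = 2 ^ (1 - 2*α) * (t₂ ^ (1-α) * t₂ ^ (2*α-1)) := by
            rw [h2a]; ring
      _ = 2 ^ (1 - 2*α) * t₂ ^ α := by rw [h2b]
      _ ≤ 2 * (2 * δ ^ α) :=
            mul_le_mul (two_rpow_le (by linarith)) h2c (Real.rpow_nonneg ht₂0.le _)
              (by norm_num)
      _ = 4 * δ ^ α := by ring
    calc t₂ ^ (1 - α) * |∫ τ in t₁..t₂, (t₂ - τ) ^ (α - 1) * f' τ|
        ≤ t₂ ^ (1 - α) * (M * m ^ (2*α-1) / α + M * m ^ (2*α-1) / α) := by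
          refine mul_le_mul_of_nonneg_left ?_ ht₂pow
          rw [← hsplit]
          exact (abs_add_le _ _).trans (add_le_add step1 step2)
    _ = (2 * M / α) * (t₂ ^ (1 - α) * m ^ (2*α-1)) := by ring
    _ ≤ (2 * M / α) * (4 * δ ^ α) :=
          mul_le_mul_of_nonneg_left hcomb (by positivity)
    _ = 8 / α * (M * δ ^ α) := by ring
  · -- 2δ < t₂ : single piece
    push_neg at hcase
    have hmt₁ : m ≤ t₁ := by rw [hmdef]; rw [hδdef] at hcase; linarith
    have e := est2 (t := t₂) ⟨hα0, hα1⟩ hint hM hM0 ht₁ h12.le ht₂T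
      (kernel_meas t₂ t₁ t₂) (Real.rpow_nonneg hm0.le (α - 1))
      (fun τ hτ => by
        rw [habs τ hτ.2, mul_comm]
        exact mul_le_mul_of_nonneg_right
          (Real.rpow_le_rpow_of_nonpos hm0 (le_trans hmt₁ hτ.1.le) (by linarith))
          (Real.rpow_nonneg (by linarith [hτ.2]) _))
    refine ⟨e.1, ?_⟩
    have step : |∫ τ in t₁..t₂, (t₂ - τ) ^ (α - 1) * f' τ| ≤ m ^ (α-1) * M * (δ ^ α / α) := by
      refine e.2.trans (le_of_eq ?_)
      rw [show t₂ - t₂ = (0:ℝ) by ring, Real.zero_rpow (ne_of_gt hα0), sub_zero, ← hδdef]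
    have hm1 : t₂ ^ (1 - α) * m ^ (α - 1) ≤ 2 := by
      have hmr : m ^ (α - 1) = 2 ^ (1 - α) * t₂ ^ (α - 1) := by
        rw [hmdef, half_rpow ht₂0, show -(α - 1) = 1 - α by ring]
      have h2b : t₂ ^ (1 - α) * t₂ ^ (α - 1) = 1 := by
        rw [← Real.rpow_add ht₂0]; norm_num
      calc t₂ ^ (1-α) * m ^ (α-1) = 2 ^ (1-α) * (t₂ ^ (1-α) * t₂ ^ (α-1)) := by
            rw [hmr]; ring
      _ = 2 ^ (1 - α) := by rw [h2b, mul_one]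
      _ ≤ 2 := two_rpow_le (by linarith)
    calc t₂ ^ (1 - α) * |∫ τ in t₁..t₂, (t₂ - τ) ^ (α - 1) * f' τ|
        ≤ t₂ ^ (1 - α) * (m ^ (α-1) * M * (δ ^ α / α)) := mul_le_mul_of_nonneg_left step ht₂pow
    _ = (t₂ ^ (1 - α) * m ^ (α-1)) * (M * δ ^ α / α) := by ring
    _ ≤ 2 * (M * δ ^ α / α) :=
          mul_le_mul_of_nonneg_right hm1 (by positivity)
    _ = (M * δ ^ α) * (2 / α) := by ring
    _ ≤ (M * δ ^ α) * (8 / α) := by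
          refine mul_le_mul_of_nonneg_left (div_mono_num hα0 (by norm_num)) (by positivity)
    _ = 8 / α * (M * δ ^ α) := by ring

lemma mul4_le {A x y z x' y' z' : ℝ} (hA : 0 ≤ A) (hx : 0 ≤ x) (hy : 0 ≤ y) (hz : 0 ≤ z)
    (h1 : x ≤ x') (h2 : y ≤ y') (h3 : z ≤ z') : A * x * y * z ≤ A * x' * y' * z' := by
  have hx' : 0 ≤ x' := hx.trans h1
  have hy' : 0 ≤ y' := hy.trans h2
  have h4 : A * x ≤ A * x' := mul_le_mul_of_nonneg_left h1 hA
  have h5 : A * x * y ≤ A * x' * y' :=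
    mul_le_mul h4 h2 hy (mul_nonneg hA hx')
  exact mul_le_mul h5 h3 hz (mul_nonneg (mul_nonneg hA hx') hy')

lemma termB (hα : α ∈ Ioo (0:ℝ) 1)
    (hint : IntegrableOn f' (Icc 0 T))
    (hM : ∀ᵐ t ∂(volume.restrict (Ioo (0:ℝ) T)), |t ^ (1 - α) * f' t| ≤ M)
    (hM0 : 0 ≤ M) (ht₁ : 0 ≤ t₁) (h12 : t₁ < t₂) (ht₂T : t₂ ≤ T) :
    IntervalIntegrable (fun τ => (t₂ - τ) ^ (α - 1) * f' τ) volume 0 t₁ ∧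
      (t₂ ^ (1 - α) - t₁ ^ (1 - α)) * |∫ τ in (0:ℝ)..t₁, (t₂ - τ) ^ (α - 1) * f' τ| ≤
        4 / α * (M * (t₂ - t₁) ^ α) := by
  obtain ⟨hα0, hα1⟩ := hα
  set δ := t₂ - t₁ with hδdef
  have hδ : 0 < δ := by rw [hδdef]; linarith
  have ht₂0 : 0 < t₂ := lt_of_le_of_lt ht₁ h12
  have ht₁T : t₁ ≤ T := by linarith
  have habs : ∀ τ : ℝ, τ < t₂ → |(t₂ - τ) ^ (α - 1)| = (t₂ - τ) ^ (α - 1) := fun τ hτ =>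
    abs_of_nonneg (Real.rpow_nonneg (by linarith) _)
  have hδpow : 0 ≤ δ ^ α := Real.rpow_nonneg hδ.le _
  by_cases hcase : t₁ ≤ δ
  · -- t₁ ≤ δ
    have e := est1 ⟨hα0, hα1⟩ hint hM hM0 le_rfl ht₁ ht₁T
      (kernel_meas t₂ 0 t₁) (Real.rpow_nonneg hδ.le (α - 1))
      (fun τ hτ => by
        have h2 : τ < t₁ := hτ.2
        rw [habs τ (by linarith)]
        exact Real.rpow_le_rpow_of_nonpos hδ (by rw [hδdef]; linarith) (by linarith))
    refine ⟨e.1, ?_⟩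
    have step : |∫ τ in (0:ℝ)..t₁, (t₂ - τ) ^ (α - 1) * f' τ| ≤ δ ^ (α-1) * M * (t₁ ^ α / α) := by
      refine e.2.trans (le_of_eq ?_)
      rw [Real.zero_rpow (ne_of_gt hα0), sub_zero]
    have hβ : t₂ ^ (1 - α) - t₁ ^ (1 - α) ≤ δ ^ (1 - α) := by
      have h := rpow_add_le ht₁ hδ.le (by linarith : (0:ℝ) < 1 - α) (by linarith)
      rw [show t₁ + δ = t₂ from by rw [hδdef]; ring] at h
      linarith
    have hβ0 : 0 ≤ t₂ ^ (1 - α) - t₁ ^ (1 - α) :=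
      sub_nonneg.mpr (Real.rpow_le_rpow ht₁ h12.le (by linarith))
    have hone : δ ^ (1 - α) * δ ^ (α - 1) = 1 := by
      rw [← Real.rpow_add hδ]; norm_num
    calc (t₂ ^ (1 - α) - t₁ ^ (1 - α)) * |∫ τ in (0:ℝ)..t₁, (t₂ - τ) ^ (α - 1) * f' τ|
        ≤ δ ^ (1 - α) * (δ ^ (α-1) * M * (t₁ ^ α / α)) :=
          mul_le_mul hβ step (abs_nonneg _) (Real.rpow_nonneg hδ.le _)
    _ = (δ ^ (1-α) * δ ^ (α-1)) * (M * t₁ ^ α / α) := by ring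
    _ = M * t₁ ^ α / α := by rw [hone, one_mul]
    _ ≤ M * δ ^ α / α := by
          exact div_mono_num hα0 (mul_le_mul_of_nonneg_left
            (Real.rpow_le_rpow ht₁ hcase hα0.le) hM0)
    _ ≤ 4 / α * (M * δ ^ α) := by
          rw [show M * δ ^ α / α = (M * δ ^ α) * (1/α) by ring,
            show 4 / α * (M * δ ^ α) = (M * δ ^ α) * (4/α) by ring]
          exact mul_le_mul_of_nonneg_left (div_mono_num hα0 (by norm_num)) (by positivity)
  · -- δ < t₁
    push_neg at hcase
    have ht₁0 : 0 < t₁ := hδ.trans hcase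
    set m := t₁ / 2 with hmdef
    have hm0 : 0 < m := by positivity
    have hmt₁ : m ≤ t₁ := by rw [hmdef]; linarith
    have hF1 : m ^ (α - 1) * m ^ α = m ^ (2 * α - 1) := by
      rw [← Real.rpow_add hm0]; ring_nf
    have e1 := est1 ⟨hα0, hα1⟩ hint hM hM0 le_rfl hm0.le (by linarith)
      (kernel_meas t₂ 0 m) (Real.rpow_nonneg hm0.le (α - 1))
      (fun τ hτ => by
        have h2 : τ < m := hτ.2
        rw [habs τ (by rw [hmdef] at h2; linarith)]
        refine Real.rpow_le_rpow_of_nonpos hm0 ?_ (by linarith)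
        rw [hmdef] at h2 ⊢; linarith)
    have e2 := est2 (t := t₁) ⟨hα0, hα1⟩ hint hM hM0 hm0.le hmt₁ ht₁T
      (kernel_meas t₂ m t₁) (Real.rpow_nonneg hm0.le (α - 1))
      (fun τ hτ => by
        have hτt₁ : τ < t₁ := hτ.2
        have h1 : |(t₂ - τ) ^ (α-1)| ≤ (t₁ - τ) ^ (α-1) := by
          rw [habs τ (by linarith)]
          exact Real.rpow_le_rpow_of_nonpos (by linarith) (by linarith) (by linarith)
        have h2 : τ ^ (α-1) ≤ m ^ (α-1) :=
          Real.rpow_le_rpow_of_nonpos hm0 hτ.1.le (by linarith)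
        calc |(t₂ - τ) ^ (α-1)| * τ ^ (α-1) ≤ (t₁ - τ) ^ (α-1) * m ^ (α-1) :=
              mul_le_mul h1 h2 (Real.rpow_nonneg (by linarith [hτ.1, hm0]) _)
                (Real.rpow_nonneg (by linarith) _)
        _ = m ^ (α-1) * (t₁ - τ) ^ (α-1) := mul_comm _ _)
    refine ⟨e1.1.trans e2.1, ?_⟩
    have hsplit := intervalIntegral.integral_add_adjacent_intervals e1.1 e2.1
    have step1 : |∫ τ in (0:ℝ)..m, (t₂ - τ) ^ (α - 1) * f' τ| ≤ M * m ^ (2*α - 1) / α := by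
      refine e1.2.trans (le_of_eq ?_)
      rw [Real.zero_rpow (ne_of_gt hα0), sub_zero, ← hF1]; ring
    have step2 : |∫ τ in m..t₁, (t₂ - τ) ^ (α - 1) * f' τ| ≤ M * m ^ (2*α - 1) / α := by
      refine e2.2.trans (le_of_eq ?_)
      rw [show t₁ - t₁ = (0:ℝ) by ring, show t₁ - m = m from by rw [hmdef]; ring,
        Real.zero_rpow (ne_of_gt hα0), sub_zero, ← hF1]; ring
    have hIa : |∫ τ in (0:ℝ)..t₁, (t₂ - τ) ^ (α - 1) * f' τ| ≤ 2 * M * m ^ (2*α-1) / α := by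
      rw [← hsplit]
      refine (abs_add_le _ _).trans ?_
      calc |∫ τ in (0:ℝ)..m, (t₂-τ)^(α-1) * f' τ| + |∫ τ in m..t₁, (t₂-τ)^(α-1) * f' τ|
          ≤ M * m ^ (2*α-1)/α + M * m ^ (2*α-1)/α := add_le_add step1 step2
      _ = 2 * M * m ^ (2*α-1) / α := by ring
    have hβ2 : t₂ ^ (1 - α) - t₁ ^ (1 - α) ≤ (1-α) * δ * t₁ ^ (-α) := by
      have h := rpow_diff_le' ht₁0 h12.le (by linarith : (0:ℝ) < 1 - α) (by linarith)
      rw [show (1:ℝ) - α - 1 = -α by ring] at h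
      rw [hδdef]
      exact h
    have hβ2nn : 0 ≤ (1-α) * δ * t₁ ^ (-α) :=
      mul_nonneg (mul_nonneg (by linarith) hδ.le) (Real.rpow_nonneg ht₁0.le _)
    have hmeq : m ^ (2*α-1) = 2 ^ (1-2*α) * t₁ ^ (2*α-1) := by
      rw [hmdef, half_rpow ht₁0, show -(2*α-1) = 1-2*α by ring]
    have hmul : t₁ ^ (-α) * t₁ ^ (2*α-1) = t₁ ^ (α-1) := by
      rw [← Real.rpow_add ht₁0]; ring_nf
    calc (t₂ ^ (1 - α) - t₁ ^ (1 - α)) * |∫ τ in (0:ℝ)..t₁, (t₂ - τ) ^ (α - 1) * f' τ|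
        ≤ ((1-α) * δ * t₁ ^ (-α)) * (2 * M * m ^ (2*α-1) / α) := by
          refine mul_le_mul hβ2 hIa (abs_nonneg _) hβ2nn
    _ = (2*M/α) * (1-α) * (2 ^ (1-2*α)) * (δ * (t₁ ^ (-α) * t₁ ^ (2*α-1))) := by
          rw [hmeq]; ring
    _ = (2*M/α) * (1-α) * (2 ^ (1-2*α)) * (δ * t₁ ^ (α-1)) := by rw [hmul]
    _ ≤ (2*M/α) * 1 * 2 * (δ ^ α) := by
          refine mul4_le (by positivity) (by linarith) (Real.rpow_nonneg (by norm_num) _)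
            (mul_nonneg hδ.le (Real.rpow_nonneg ht₁0.le _)) (by linarith)
            (two_rpow_le (by linarith)) (delta_bound hδ hcase.le hα0 hα1.le)
    _ = 4 / α * (M * δ ^ α) := by ring

lemma kernel_int (hα : α ∈ Ioo (0:ℝ) 1)
    (hint : IntegrableOn f' (Icc 0 T))
    (hM : ∀ᵐ t ∂(volume.restrict (Ioo (0:ℝ) T)), |t ^ (1 - α) * f' t| ≤ M)
    (hM0 : 0 ≤ M) {t : ℝ} (ht : 0 ≤ t) (htT : t ≤ T) :
    IntervalIntegrable (fun τ => (t - τ) ^ (α - 1) * f' τ) volume 0 t := by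
  obtain ⟨hα0, hα1⟩ := hα
  rcases eq_or_lt_of_le ht with h | ht0
  · subst h
    exact IntervalIntegrable.refl
  set m := t / 2 with hmdef
  have hm0 : 0 < m := by positivity
  have habs : ∀ τ : ℝ, τ < t → |(t - τ) ^ (α - 1)| = (t - τ) ^ (α - 1) := fun τ hτ =>
    abs_of_nonneg (Real.rpow_nonneg (by linarith) _)
  have e1 := est1 ⟨hα0, hα1⟩ hint hM hM0 le_rfl hm0.le (by linarith)
    (kernel_meas t 0 m) (Real.rpow_nonneg hm0.le (α - 1))
    (fun τ hτ => by
      have h2 : τ < m := hτ.2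
      rw [habs τ (by rw [hmdef] at h2; linarith)]
      refine Real.rpow_le_rpow_of_nonpos hm0 ?_ (by linarith)
      rw [hmdef] at h2 ⊢; linarith)
  have e2 := est2 (t := t) ⟨hα0, hα1⟩ hint hM hM0 hm0.le (by rw [hmdef]; linarith) htT
    (kernel_meas t m t) (Real.rpow_nonneg hm0.le (α - 1))
    (fun τ hτ => by
      rw [habs τ hτ.2, mul_comm]
      exact mul_le_mul_of_nonneg_right
        (Real.rpow_le_rpow_of_nonpos hm0 hτ.1.le (by linarith))
        (Real.rpow_nonneg (by linarith [hτ.2]) _))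
  exact e1.1.trans e2.1

lemma wC_meas {α : ℝ} (t₁ t₂ p q : ℝ) :
    AEStronglyMeasurable (fun τ => (t₁ - τ) ^ (α - 1) - (t₂ - τ) ^ (α - 1))
      (volume.restrict (Ioc p q)) :=
  (((measurable_id.const_sub t₁).pow_const (α - 1)).sub
    ((measurable_id.const_sub t₂).pow_const (α - 1))).aestronglyMeasurable

lemma termC (hα : α ∈ Ioo (0:ℝ) 1)
    (hint : IntegrableOn f' (Icc 0 T))
    (hM : ∀ᵐ t ∂(volume.restrict (Ioo (0:ℝ) T)), |t ^ (1 - α) * f' t| ≤ M)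
    (hM0 : 0 ≤ M) (ht₁ : 0 < t₁) (h12 : t₁ < t₂) (ht₂T : t₂ ≤ T) :
    IntervalIntegrable (fun τ => ((t₁ - τ) ^ (α - 1) - (t₂ - τ) ^ (α - 1)) * f' τ) volume 0 t₁ ∧
      t₁ ^ (1 - α) * |∫ τ in (0:ℝ)..t₁, ((t₁ - τ) ^ (α - 1) - (t₂ - τ) ^ (α - 1)) * f' τ| ≤
        8 / α * (M * (t₂ - t₁) ^ α) := by
  obtain ⟨hα0, hα1⟩ := hα
  set δ := t₂ - t₁ with hδdef
  have hδ : 0 < δ := by rw [hδdef]; linarith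
  have ht₁T : t₁ ≤ T := by linarith
  set m := t₁ / 2 with hmdef
  have hm0 : 0 < m := by positivity
  have hmt₁ : m ≤ t₁ := by rw [hmdef]; linarith
  have ht₁pow : 0 ≤ t₁ ^ (1 - α) := Real.rpow_nonneg ht₁.le _
  have hδpow : 0 ≤ δ ^ α := Real.rpow_nonneg hδ.le _
  have hMδ : 0 ≤ M * δ ^ α := mul_nonneg hM0 hδpow
  -- pointwise facts about the weight
  have hwnn : ∀ τ : ℝ, τ < t₁ →
      |(t₁ - τ) ^ (α - 1) - (t₂ - τ) ^ (α - 1)| = (t₁ - τ) ^ (α - 1) - (t₂ - τ) ^ (α - 1) := by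
    intro τ hτ
    exact abs_of_nonneg (sub_nonneg.mpr
      (Real.rpow_le_rpow_of_nonpos (by linarith) (by linarith) (by linarith)))
  have hub1 : ∀ τ : ℝ, τ < t₁ →
      (t₁ - τ) ^ (α - 1) - (t₂ - τ) ^ (α - 1) ≤ (t₁ - τ) ^ (α - 1) := by
    intro τ hτ
    have := Real.rpow_nonneg (show (0:ℝ) ≤ t₂ - τ by linarith) (α - 1)
    linarith
  have hub2 : ∀ τ : ℝ, τ < t₁ →
      (t₁ - τ) ^ (α - 1) - (t₂ - τ) ^ (α - 1) ≤ (1 - α) * δ * (t₁ - τ) ^ (α - 2) := by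
    intro τ hτ
    have h := rpow_diff_le (x := t₁ - τ) (y := t₂ - τ) (p := α - 1)
      (by linarith) (by linarith) (by linarith)
    rw [show t₂ - τ - (t₁ - τ) = δ from by rw [hδdef]; ring,
      show -(α - 1) = 1 - α by ring, show α - 1 - 1 = α - 2 by ring] at h
    exact h
  have E5 : m ^ (α - 1) = 2 ^ (1 - α) * t₁ ^ (α - 1) := by
    rw [hmdef, half_rpow ht₁, show -(α - 1) = 1 - α by ring]
  have E6 : t₁ ^ (1 - α) * t₁ ^ (α - 1) = 1 := by
    rw [← Real.rpow_add ht₁]; norm_num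
  have E4 : δ * δ ^ (α - 1) = δ ^ α := by
    calc δ * δ ^ (α - 1) = δ ^ (1:ℝ) * δ ^ (α - 1) := by rw [Real.rpow_one]
    _ = δ ^ α := by rw [← Real.rpow_add hδ]; ring_nf
  have hF1 : m ^ (α - 1) * m ^ α = m ^ (2 * α - 1) := by
    rw [← Real.rpow_add hm0]; ring_nf
  by_cases hcase : t₁ ≤ 2 * δ
  · -- t₁ ≤ 2δ : split at m
    have e1 := est1 ⟨hα0, hα1⟩ hint hM hM0 le_rfl hm0.le (by linarith)
      (wC_meas t₁ t₂ 0 m) (Real.rpow_nonneg hm0.le (α - 1))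
      (fun τ hτ => by
        have h2 : τ < m := hτ.2
        have hτt₁ : τ < t₁ := lt_of_lt_of_le h2 hmt₁
        rw [hwnn τ hτt₁]
        refine (hub1 τ hτt₁).trans ?_
        refine Real.rpow_le_rpow_of_nonpos hm0 ?_ (by linarith)
        rw [hmdef] at h2 ⊢; linarith)
    have e2 := est2 (t := t₁) ⟨hα0, hα1⟩ hint hM hM0 hm0.le hmt₁ ht₁T
      (wC_meas t₁ t₂ m t₁) (Real.rpow_nonneg hm0.le (α - 1))
      (fun τ hτ => by
        have hτt₁ : τ < t₁ := hτ.2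
        rw [hwnn τ hτt₁]
        have h1 := hub1 τ hτt₁
        have h2 : τ ^ (α-1) ≤ m ^ (α-1) :=
          Real.rpow_le_rpow_of_nonpos hm0 hτ.1.le (by linarith)
        calc ((t₁-τ)^(α-1) - (t₂-τ)^(α-1)) * τ ^ (α-1) ≤ (t₁ - τ)^(α-1) * m ^ (α-1) :=
              mul_le_mul h1 h2 (Real.rpow_nonneg (le_of_lt (lt_trans hm0 hτ.1)) _)
                (Real.rpow_nonneg (by linarith) _)
        _ = m ^ (α-1) * (t₁ - τ) ^ (α-1) := mul_comm _ _)
    refine ⟨e1.1.trans e2.1, ?_⟩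
    have hsplit := intervalIntegral.integral_add_adjacent_intervals e1.1 e2.1
    have step1 : |∫ τ in (0:ℝ)..m, ((t₁-τ)^(α-1) - (t₂-τ)^(α-1)) * f' τ|
        ≤ M * m ^ (2*α - 1) / α := by
      refine e1.2.trans (le_of_eq ?_)
      rw [Real.zero_rpow (ne_of_gt hα0), sub_zero, ← hF1]; ring
    have step2 : |∫ τ in m..t₁, ((t₁-τ)^(α-1) - (t₂-τ)^(α-1)) * f' τ|
        ≤ M * m ^ (2*α - 1) / α := by
      refine e2.2.trans (le_of_eq ?_)
      rw [show t₁ - t₁ = (0:ℝ) by ring, show t₁ - m = m from by rw [hmdef]; ring,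
        Real.zero_rpow (ne_of_gt hα0), sub_zero, ← hF1]; ring
    have hcomb : t₁ ^ (1 - α) * m ^ (2*α - 1) ≤ 4 * δ ^ α := by
      have h2a : m ^ (2*α - 1) = 2 ^ (1 - 2*α) * t₁ ^ (2*α - 1) := by
        rw [hmdef, half_rpow ht₁, show -(2*α - 1) = 1 - 2*α by ring]
      have h2b : t₁ ^ (1 - α) * t₁ ^ (2*α - 1) = t₁ ^ α := by
        rw [← Real.rpow_add ht₁]; ring_nf
      have h2c : t₁ ^ α ≤ 2 * δ ^ α := by
        calc t₁ ^ α ≤ (2 * δ) ^ α := Real.rpow_le_rpow ht₁.le hcase hα0.le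
        _ = 2 ^ α * δ ^ α := Real.mul_rpow (by norm_num) hδ.le
        _ ≤ 2 * δ ^ α := mul_le_mul_of_nonneg_right (two_rpow_le hα1.le) hδpow
      calc t₁ ^ (1 - α) * m ^ (2*α - 1) = 2 ^ (1 - 2*α) * (t₁ ^ (1-α) * t₁ ^ (2*α-1)) := by
            rw [h2a]; ring
      _ = 2 ^ (1 - 2*α) * t₁ ^ α := by rw [h2b]
      _ ≤ 2 * (2 * δ ^ α) :=
            mul_le_mul (two_rpow_le (by linarith)) h2c (Real.rpow_nonneg ht₁.le _)
              (by norm_num)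
      _ = 4 * δ ^ α := by ring
    calc t₁ ^ (1 - α) * |∫ τ in (0:ℝ)..t₁, ((t₁-τ)^(α-1) - (t₂-τ)^(α-1)) * f' τ|
        ≤ t₁ ^ (1 - α) * (M * m ^ (2*α-1) / α + M * m ^ (2*α-1) / α) := by
          refine mul_le_mul_of_nonneg_left ?_ ht₁pow
          rw [← hsplit]
          exact (abs_add_le _ _).trans (add_le_add step1 step2)
    _ = (2 * M / α) * (t₁ ^ (1 - α) * m ^ (2*α-1)) := by ring
    _ ≤ (2 * M / α) * (4 * δ ^ α) :=
          mul_le_mul_of_nonneg_left hcomb (by positivity)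
    _ = 8 / α * (M * δ ^ α) := by ring
  · -- 2δ < t₁ : three pieces 0 < m < t₁ - δ < t₁
    push_neg at hcase
    have hδm : δ < m := by rw [hmdef]; linarith
    have hmq : m ≤ t₁ - δ := by rw [hmdef]; linarith
    have hδt₁ : δ ≤ t₁ := by linarith
    have e1 := est1 (c := (1-α) * δ * m ^ (α-2)) ⟨hα0, hα1⟩ hint hM hM0 le_rfl hm0.le
      (by linarith) (wC_meas t₁ t₂ 0 m)
      (mul_nonneg (mul_nonneg (by linarith) hδ.le) (Real.rpow_nonneg hm0.le (α - 2)))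
      (fun τ hτ => by
        have h2 : τ < m := hτ.2
        have hτt₁ : τ < t₁ := lt_of_lt_of_le h2 hmt₁
        rw [hwnn τ hτt₁]
        refine (hub2 τ hτt₁).trans ?_
        refine mul_le_mul_of_nonneg_left ?_ (mul_nonneg (by linarith) hδ.le)
        refine Real.rpow_le_rpow_of_nonpos hm0 ?_ (by linarith)
        rw [hmdef] at h2 ⊢; linarith)
    have e2 := est3 (t := t₁) ⟨hα0, hα1⟩ hint hM hM0 hm0.le hmq
      (show t₁ - δ ≤ T by linarith) (show t₁ - δ < t₁ by linarith) (wC_meas t₁ t₂ m (t₁ - δ))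
      (c := (1-α) * δ * m ^ (α-1))
      (mul_nonneg (mul_nonneg (by linarith) hδ.le) (Real.rpow_nonneg hm0.le (α - 1)))
      (fun τ hτ => by
        have hτt₁ : τ < t₁ := by linarith [hτ.2]
        rw [hwnn τ hτt₁]
        have h1 := hub2 τ hτt₁
        have h2 : τ ^ (α-1) ≤ m ^ (α-1) :=
          Real.rpow_le_rpow_of_nonpos hm0 hτ.1.le (by linarith)
        calc ((t₁-τ)^(α-1) - (t₂-τ)^(α-1)) * τ ^ (α-1)
            ≤ ((1-α) * δ * (t₁-τ)^(α-2)) * m ^ (α-1) := by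
              refine mul_le_mul h1 h2 (Real.rpow_nonneg (le_of_lt (lt_trans hm0 hτ.1)) _)
                (mul_nonneg (mul_nonneg (by linarith) hδ.le)
                  (Real.rpow_nonneg (by linarith) _))
        _ = (1-α) * δ * m ^ (α-1) * (t₁-τ)^(α-2) := by ring)
    have e3 := est2 (t := t₁) ⟨hα0, hα1⟩ hint hM hM0 (by linarith : (0:ℝ) ≤ t₁ - δ)
      (by linarith) ht₁T (wC_meas t₁ t₂ (t₁ - δ) t₁) (Real.rpow_nonneg hm0.le (α - 1))
      (fun τ hτ => by
        have hτt₁ : τ < t₁ := hτ.2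
        rw [hwnn τ hτt₁]
        have h1 := hub1 τ hτt₁
        have h2 : τ ^ (α-1) ≤ m ^ (α-1) :=
          Real.rpow_le_rpow_of_nonpos hm0 (by linarith [hτ.1]) (by linarith)
        calc ((t₁-τ)^(α-1) - (t₂-τ)^(α-1)) * τ ^ (α-1) ≤ (t₁ - τ)^(α-1) * m ^ (α-1) :=
              mul_le_mul h1 h2 (Real.rpow_nonneg (by linarith [hτ.1]) _)
                (Real.rpow_nonneg (by linarith) _)
        _ = m ^ (α-1) * (t₁ - τ) ^ (α-1) := mul_comm _ _)
    refine ⟨(e1.1.trans e2.1).trans e3.1, ?_⟩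
    have hsplit1 := intervalIntegral.integral_add_adjacent_intervals e1.1 e2.1
    have hsplit2 := intervalIntegral.integral_add_adjacent_intervals (e1.1.trans e2.1) e3.1
    -- contribution 1
    have c1 : t₁ ^ (1-α) * |∫ τ in (0:ℝ)..m, ((t₁-τ)^(α-1) - (t₂-τ)^(α-1)) * f' τ|
        ≤ 4 / α * (M * δ ^ α) := by
      have E1 : m ^ (α-2) * m ^ α = m ^ (2*α - 2) := by
        rw [← Real.rpow_add hm0]; ring_nf
      have E2 : m ^ (2*α-2) = 2 ^ (2-2*α) * t₁ ^ (2*α-2) := by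
        rw [hmdef, half_rpow ht₁, show -(2*α-2) = 2-2*α by ring]
      have E3 : t₁ ^ (2*α-2) * t₁ ^ (1-α) = t₁ ^ (α-1) := by
        rw [← Real.rpow_add ht₁]; ring_nf
      have hb := e1.2
      rw [Real.zero_rpow (ne_of_gt hα0), sub_zero] at hb
      calc t₁ ^ (1-α) * |∫ τ in (0:ℝ)..m, ((t₁-τ)^(α-1) - (t₂-τ)^(α-1)) * f' τ|
          ≤ t₁ ^ (1-α) * ((1-α) * δ * m ^ (α-2) * M * (m ^ α / α)) :=
            mul_le_mul_of_nonneg_left hb ht₁pow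
      _ = (M/α) * (1-α) * (m ^ (α-2) * m ^ α) * (δ * t₁ ^ (1-α)) := by ring
      _ = (M/α) * (1-α) * (2 ^ (2-2*α)) * (δ * (t₁ ^ (2*α-2) * t₁ ^ (1-α))) := by
            rw [E1, E2]; ring
      _ = (M/α) * (1-α) * (2 ^ (2-2*α)) * (δ * t₁ ^ (α-1)) := by rw [E3]
      _ ≤ (M/α) * 1 * 4 * (δ ^ α) := by
            refine mul4_le (div_nonneg hM0 hα0.le) (by linarith)
              (Real.rpow_nonneg (by norm_num) _)
              (mul_nonneg hδ.le (Real.rpow_nonneg ht₁.le _)) (by linarith)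
              (two_rpow_le' (by linarith)) (delta_bound hδ hδt₁ hα0 hα1.le)
      _ = 4 / α * (M * δ ^ α) := by ring
    -- contribution 2
    have c2 : t₁ ^ (1-α) * |∫ τ in m..(t₁ - δ), ((t₁-τ)^(α-1) - (t₂-τ)^(α-1)) * f' τ|
        ≤ 2 * (M * δ ^ α) := by
      have hb := e2.2
      rw [show t₁ - (t₁ - δ) = δ by ring, show t₁ - m = m from by rw [hmdef]; ring] at hb
      have hb' : |∫ τ in m..(t₁ - δ), ((t₁-τ)^(α-1) - (t₂-τ)^(α-1)) * f' τ|
          ≤ (1-α) * δ * m ^ (α-1) * M * (δ ^ (α-1) / (1-α)) := by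
        refine hb.trans ?_
        refine mul_le_mul_of_nonneg_left
          (div_mono_num (by linarith) (sub_le_self _ (Real.rpow_nonneg hm0.le _))) ?_
        exact mul_nonneg (mul_nonneg (mul_nonneg (by linarith) hδ.le)
          (Real.rpow_nonneg hm0.le _)) hM0
      have heq : (1-α) * δ * m ^ (α-1) * M * (δ ^ (α-1) / (1-α))
          = M * m ^ (α-1) * (δ * δ ^ (α-1)) := by
        have h1α : (1:ℝ) - α ≠ 0 := by intro h; rw [sub_eq_zero] at h; linarith
        field_simp
      rw [heq, E4] at hb'
      calc t₁ ^ (1-α) * |∫ τ in m..(t₁ - δ), ((t₁-τ)^(α-1) - (t₂-τ)^(α-1)) * f' τ|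
          ≤ t₁ ^ (1-α) * (M * m ^ (α-1) * δ ^ α) := mul_le_mul_of_nonneg_left hb' ht₁pow
      _ = (2 ^ (1-α) * (t₁ ^ (1-α) * t₁ ^ (α-1))) * (M * δ ^ α) := by rw [E5]; ring
      _ = 2 ^ (1-α) * (M * δ ^ α) := by rw [E6, mul_one]
      _ ≤ 2 * (M * δ ^ α) := mul_le_mul_of_nonneg_right (two_rpow_le (by linarith)) hMδ
    -- contribution 3
    have c3 : t₁ ^ (1-α) * |∫ τ in (t₁ - δ)..t₁, ((t₁-τ)^(α-1) - (t₂-τ)^(α-1)) * f' τ|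
        ≤ 2 / α * (M * δ ^ α) := by
      have hb := e3.2
      rw [show t₁ - (t₁ - δ) = δ by ring, show t₁ - t₁ = (0:ℝ) by ring,
        Real.zero_rpow (ne_of_gt hα0), sub_zero] at hb
      calc t₁ ^ (1-α) * |∫ τ in (t₁ - δ)..t₁, ((t₁-τ)^(α-1) - (t₂-τ)^(α-1)) * f' τ|
          ≤ t₁ ^ (1-α) * (m ^ (α-1) * M * (δ ^ α / α)) := mul_le_mul_of_nonneg_left hb ht₁pow
      _ = (2 ^ (1-α) * (t₁ ^ (1-α) * t₁ ^ (α-1))) * (M * δ ^ α / α) := by rw [E5]; ring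
      _ = 2 ^ (1-α) * (M * δ ^ α / α) := by rw [E6, mul_one]
      _ ≤ 2 * (M * δ ^ α / α) := mul_le_mul_of_nonneg_right (two_rpow_le (by linarith))
            (by positivity)
      _ = 2 / α * (M * δ ^ α) := by ring
    have habs3 : |∫ τ in (0:ℝ)..t₁, ((t₁-τ)^(α-1) - (t₂-τ)^(α-1)) * f' τ|
        ≤ |∫ τ in (0:ℝ)..m, ((t₁-τ)^(α-1) - (t₂-τ)^(α-1)) * f' τ|
          + |∫ τ in m..(t₁-δ), ((t₁-τ)^(α-1) - (t₂-τ)^(α-1)) * f' τ|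
          + |∫ τ in (t₁-δ)..t₁, ((t₁-τ)^(α-1) - (t₂-τ)^(α-1)) * f' τ| := by
      rw [← hsplit2, ← hsplit1]
      exact (abs_add_le _ _).trans (add_le_add (abs_add_le _ _) le_rfl)
    have h2α : (2:ℝ) ≤ 2 / α := by rw [le_div_iff₀ hα0]; linarith
    calc t₁ ^ (1-α) * |∫ τ in (0:ℝ)..t₁, ((t₁-τ)^(α-1) - (t₂-τ)^(α-1)) * f' τ|
        ≤ t₁ ^ (1-α) * (|∫ τ in (0:ℝ)..m, ((t₁-τ)^(α-1) - (t₂-τ)^(α-1)) * f' τ|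
          + |∫ τ in m..(t₁-δ), ((t₁-τ)^(α-1) - (t₂-τ)^(α-1)) * f' τ|
          + |∫ τ in (t₁-δ)..t₁, ((t₁-τ)^(α-1) - (t₂-τ)^(α-1)) * f' τ|) :=
          mul_le_mul_of_nonneg_left habs3 ht₁pow
    _ = t₁ ^ (1-α) * |∫ τ in (0:ℝ)..m, ((t₁-τ)^(α-1) - (t₂-τ)^(α-1)) * f' τ|
          + t₁ ^ (1-α) * |∫ τ in m..(t₁-δ), ((t₁-τ)^(α-1) - (t₂-τ)^(α-1)) * f' τ|
          + t₁ ^ (1-α) * |∫ τ in (t₁-δ)..t₁, ((t₁-τ)^(α-1) - (t₂-τ)^(α-1)) * f' τ| := by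
          ring
    _ ≤ 4 / α * (M * δ ^ α) + 2 * (M * δ ^ α) + 2 / α * (M * δ ^ α) :=
          add_le_add (add_le_add c1 c2) c3
    _ ≤ 4 / α * (M * δ ^ α) + 2 / α * (M * δ ^ α) + 2 / α * (M * δ ^ α) := by
          have := mul_le_mul_of_nonneg_right h2α hMδ
          linarith
    _ = 8 / α * (M * δ ^ α) := by ring

end Terms

theorem rl_holder_estimate (α : ℝ) (hα : α ∈ Ioo (0:ℝ) 1) :
    ∃ C₀ : ℝ, 0 < C₀ ∧
      ∀ (T : ℝ) (_hT : 0 < T) (f f' : ℝ → ℝ),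
        IntegrableOn f' (Icc 0 T) →
        (∀ t ∈ Icc (0:ℝ) T, f t = f 0 + ∫ s in (0:ℝ)..t, f' s) →
        ∀ M : ℝ, (∀ᵐ t ∂(volume.restrict (Ioo (0:ℝ) T)), |t ^ (1 - α) * f' t| ≤ M) →
        ∀ t₁ ∈ Icc (0:ℝ) T, ∀ t₂ ∈ Icc (0:ℝ) T, t₁ ≤ t₂ →
          |t₂ ^ (1 - α) * riemannLiouville α f' t₂
            - t₁ ^ (1 - α) * riemannLiouville α f' t₁| ≤ C₀ * M * |t₂ - t₁| ^ α := by
  obtain ⟨hα0, hα1⟩ := hα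
  have hΓ : 0 < Real.Gamma α := Real.Gamma_pos_of_pos hα0
  refine ⟨24 / (α * Real.Gamma α), by positivity, ?_⟩
  intro T hT f f' hint _hf M hM t₁ ht₁I t₂ ht₂I h12
  obtain ⟨ht₁0, ht₁T⟩ := ht₁I
  obtain ⟨ht₂0, ht₂T⟩ := ht₂I
  -- M is nonnegative
  have hM0 : 0 ≤ M := by
    by_contra hneg
    push_neg at hneg
    have h1 : ∀ᵐ t ∂volume.restrict (Ioo (0:ℝ) T), False :=
      hM.mono fun t ht => absurd ((abs_nonneg _).trans ht) (not_le.mpr hneg)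
    have h3 : volume.restrict (Ioo (0:ℝ) T) = 0 := by
      rwa [Filter.eventually_false_iff_eq_bot, ae_eq_bot] at h1
    have h4 : volume (Ioo (0:ℝ) T) = 0 := by
      rw [← Measure.restrict_apply_self, h3]; simp
    rw [Real.volume_Ioo, sub_zero] at h4
    rw [ENNReal.ofReal_eq_zero] at h4
    linarith
  rcases eq_or_lt_of_le h12 with heq | hlt
  · rw [heq]
    simp [sub_self, Real.zero_rpow (ne_of_gt hα0)]
  -- main case t₁ < t₂
  have hδ : 0 < t₂ - t₁ := by linarith
  have hδabs : |t₂ - t₁| = t₂ - t₁ := abs_of_pos hδ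
  have hMδ : 0 ≤ M * (t₂ - t₁) ^ α := mul_nonneg hM0 (Real.rpow_nonneg hδ.le _)
  have hA := termA ⟨hα0, hα1⟩ hint hM hM0 ht₁0 hlt ht₂T
  have hB := termB ⟨hα0, hα1⟩ hint hM hM0 ht₁0 hlt ht₂T
  have hK1 : IntervalIntegrable (fun τ => (t₁ - τ) ^ (α - 1) * f' τ) volume 0 t₁ :=
    kernel_int ⟨hα0, hα1⟩ hint hM hM0 ht₁0 ht₁T
  set I₂ := ∫ τ in (0:ℝ)..t₂, (t₂ - τ) ^ (α - 1) * f' τ with hI₂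
  set I₁ := ∫ τ in (0:ℝ)..t₁, (t₁ - τ) ^ (α - 1) * f' τ with hI₁
  set Ia := ∫ τ in (0:ℝ)..t₁, (t₂ - τ) ^ (α - 1) * f' τ with hIa
  set Ib := ∫ τ in t₁..t₂, (t₂ - τ) ^ (α - 1) * f' τ with hIb
  have ha : Ia + Ib = I₂ := intervalIntegral.integral_add_adjacent_intervals hB.1 hA.1
  have hIw : (∫ τ in (0:ℝ)..t₁, ((t₁ - τ) ^ (α - 1) - (t₂ - τ) ^ (α - 1)) * f' τ)
      = I₁ - Ia := by
    simp only [sub_mul]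
    exact intervalIntegral.integral_sub hK1 hB.1
  -- the C-term bound
  have hC : t₁ ^ (1 - α) * |I₁ - Ia| ≤ 8 / α * (M * (t₂ - t₁) ^ α) := by
    rcases eq_or_lt_of_le ht₁0 with h0 | ht₁pos
    · have hz : t₁ ^ (1 - α) = 0 := by
        rw [← h0]; exact Real.zero_rpow (show (0:ℝ) < 1 - α by linarith).ne'
      rw [hz, zero_mul]
      exact mul_nonneg (div_nonneg (by norm_num) hα0.le) hMδ
    · rw [← hIw]
      exact (termC ⟨hα0, hα1⟩ hint hM hM0 ht₁pos hlt ht₂T).2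
  have hβ0 : 0 ≤ t₂ ^ (1 - α) - t₁ ^ (1 - α) :=
    sub_nonneg.mpr (Real.rpow_le_rpow ht₁0 h12 (by linarith))
  have hkey : |t₂ ^ (1 - α) * I₂ - t₁ ^ (1 - α) * I₁| ≤ 20 / α * (M * (t₂ - t₁) ^ α) := by
    have hid : t₂ ^ (1 - α) * I₂ - t₁ ^ (1 - α) * I₁
        = t₂ ^ (1 - α) * Ib + (t₂ ^ (1 - α) - t₁ ^ (1 - α)) * Ia
          + (-(t₁ ^ (1 - α))) * (I₁ - Ia) := by
      rw [← ha]; ring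
    rw [hid]
    calc |t₂ ^ (1-α) * Ib + (t₂ ^ (1-α) - t₁ ^ (1-α)) * Ia + (-(t₁ ^ (1-α))) * (I₁ - Ia)|
        ≤ |t₂ ^ (1-α) * Ib + (t₂ ^ (1-α) - t₁ ^ (1-α)) * Ia| + |(-(t₁ ^ (1-α))) * (I₁ - Ia)| :=
          abs_add_le _ _
    _ ≤ |t₂ ^ (1-α) * Ib| + |(t₂ ^ (1-α) - t₁ ^ (1-α)) * Ia| + |(-(t₁ ^ (1-α))) * (I₁ - Ia)| :=
          add_le_add (abs_add_le _ _) le_rfl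
    _ = t₂ ^ (1-α) * |Ib| + (t₂ ^ (1-α) - t₁ ^ (1-α)) * |Ia| + t₁ ^ (1-α) * |I₁ - Ia| := by
          rw [abs_mul, abs_mul, abs_mul, abs_of_nonneg (Real.rpow_nonneg (by linarith) (1-α)),
            abs_of_nonneg hβ0, abs_neg, abs_of_nonneg (Real.rpow_nonneg ht₁0 (1-α))]
    _ ≤ 8 / α * (M * (t₂-t₁) ^ α) + 4 / α * (M * (t₂-t₁) ^ α) + 8 / α * (M * (t₂-t₁) ^ α) :=
          add_le_add (add_le_add hA.2 hB.2) hC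
    _ = 20 / α * (M * (t₂ - t₁) ^ α) := by ring
  -- conclude
  have hrl : t₂ ^ (1 - α) * riemannLiouville α f' t₂ - t₁ ^ (1 - α) * riemannLiouville α f' t₁
      = (1 / Real.Gamma α) * (t₂ ^ (1 - α) * I₂ - t₁ ^ (1 - α) * I₁) := by
    rw [riemannLiouville, riemannLiouville, ← hI₂, ← hI₁]; ring
  rw [hrl, abs_mul, abs_of_nonneg (by positivity : (0:ℝ) ≤ 1 / Real.Gamma α), hδabs]
  calc 1 / Real.Gamma α * |t₂ ^ (1-α) * I₂ - t₁ ^ (1-α) * I₁|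
      ≤ 1 / Real.Gamma α * (20 / α * (M * (t₂ - t₁) ^ α)) :=
        mul_le_mul_of_nonneg_left hkey (by positivity)
  _ = 20 / (α * Real.Gamma α) * (M * (t₂ - t₁) ^ α) := by
        ring
  _ ≤ 24 / (α * Real.Gamma α) * (M * (t₂ - t₁) ^ α) :=
        mul_le_mul_of_nonneg_right (div_mono_num (by positivity) (by norm_num)) hMδ
  _ = 24 / (α * Real.Gamma α) * M * (t₂ - t₁) ^ α := by ring
end

section
/- Let α ∈ (0,1) and β ∈ (−1/2, −α). The function f(t) = t^β belongs to L²(0,T), but there exists no continuous function w on [0,T] such that the Caputo derivative D^α w(t) = f(t) holds for t ∈ (0,T]; indeed any solution must satisfy w(t) − w(0) = c_{α,β} t^{α+β} with c_{α,β} = Γ(β+1)/Γ(α+β+1), which is unbounded as t → 0⁺ since α + β < 0. -/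
open MeasureTheory Set intervalIntegral Filter Topology

/-- Caputo fractional derivative of order `α ∈ (0,1)`. -/
noncomputable def caputoD (α : ℝ) (w : ℝ → ℝ) (t : ℝ) : ℝ :=
  deriv (fun s => riemannLiouville (1 - α) (fun τ => w τ - w 0) s) t


lemma beta_real {a b : ℝ} (ha : 0 < a) (hb : 0 < b) :
    ∫ s in (0:ℝ)..1, s ^ (a - 1) * (1 - s) ^ (b - 1)
      = Real.Gamma a * Real.Gamma b / Real.Gamma (a + b) := by
  have hG : Real.Gamma (a + b) ≠ 0 := (Real.Gamma_pos_of_pos (by linarith)).ne'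
  have key := Complex.Gamma_mul_Gamma_eq_betaIntegral (s := a) (t := b)
    (by simpa using ha) (by simpa using hb)
  have hint : Complex.betaIntegral a b
      = ((∫ s in (0:ℝ)..1, s ^ (a - 1) * (1 - s) ^ (b - 1) : ℝ) : ℂ) := by
    rw [Complex.betaIntegral, ← intervalIntegral.integral_ofReal]
    apply intervalIntegral.integral_congr
    intro s hs
    rw [uIcc_of_le (by norm_num : (0:ℝ) ≤ 1)] at hs
    show (s:ℂ) ^ ((a:ℂ) - 1) * (1 - (s:ℂ)) ^ ((b:ℂ) - 1) = ((_ * _ : ℝ) : ℂ)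
    rw [show ((a:ℂ) - 1) = ((a - 1 : ℝ) : ℂ) by push_cast; ring,
        show ((b:ℂ) - 1) = ((b - 1 : ℝ) : ℂ) by push_cast; ring,
        show (1 - (s:ℂ)) = ((1 - s : ℝ) : ℂ) by push_cast; ring,
        ← Complex.ofReal_cpow hs.1, ← Complex.ofReal_cpow (by linarith [hs.2])]
    push_cast
    ring
  rw [hint] at key
  rw [show ((a:ℂ) + b) = ((a + b : ℝ) : ℂ) by push_cast; ring] at key
  rw [Complex.Gamma_ofReal, Complex.Gamma_ofReal, Complex.Gamma_ofReal] at key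
  have key2 : Real.Gamma a * Real.Gamma b
      = Real.Gamma (a+b) * ∫ s in (0:ℝ)..1, s ^ (a - 1) * (1 - s) ^ (b - 1) := by
    exact_mod_cast key
  field_simp
  linarith [key2]

lemma conv_kernel {a b τ x : ℝ} (ha : 0 < a) (hb : 0 < b) (h : τ < x) :
    ∫ t in τ..x, (x - t) ^ (a - 1) * (t - τ) ^ (b - 1)
      = (x - τ) ^ (a + b - 1) * (Real.Gamma a * Real.Gamma b / Real.Gamma (a + b)) := by
  set c := x - τ with hc
  have hc0 : 0 < c := by simp [hc]; linarith
  have sub := intervalIntegral.integral_comp_mul_add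
    (a := 0) (b := 1) (fun t => (x - t) ^ (a - 1) * (t - τ) ^ (b - 1)) hc0.ne' τ
  rw [mul_zero, zero_add, mul_one] at sub
  have hxc : c + τ = x := by rw [hc]; ring
  rw [hxc] at sub
  have congr1 : ∫ s in (0:ℝ)..1, (x - (c * s + τ)) ^ (a - 1) * ((c * s + τ) - τ) ^ (b - 1)
      = ∫ s in (0:ℝ)..1, c ^ (a - 1) * c ^ (b - 1) * ((1 - s) ^ (a - 1) * s ^ (b - 1)) := by
    apply intervalIntegral.integral_congr
    intro s hs
    rw [uIcc_of_le (by norm_num : (0:ℝ) ≤ 1)] at hs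
    have h1 : x - (c * s + τ) = c * (1 - s) := by rw [hc]; ring
    have h2 : (c * s + τ) - τ = c * s := by ring
    simp only [h1, h2, Real.mul_rpow hc0.le (by linarith [hs.2] : (0:ℝ) ≤ 1 - s),
      Real.mul_rpow hc0.le hs.1]
    ring
  rw [congr1, intervalIntegral.integral_const_mul] at sub
  have hbeta : ∫ s in (0:ℝ)..1, (1 - s) ^ (a - 1) * s ^ (b - 1)
      = Real.Gamma a * Real.Gamma b / Real.Gamma (a + b) := by
    have hb2 := beta_real hb ha
    rw [show b + a = a + b by ring] at hb2
    have e : ∫ s in (0:ℝ)..1, (1 - s) ^ (a - 1) * s ^ (b - 1)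
        = ∫ s in (0:ℝ)..1, s ^ (b - 1) * (1 - s) ^ (a - 1) :=
      intervalIntegral.integral_congr (fun s _ => by ring)
    rw [e, hb2]; ring
  rw [hbeta, smul_eq_mul] at sub
  have key : ∫ t in τ..x, (x - t) ^ (a - 1) * (t - τ) ^ (b - 1)
      = c ^ (a - 1) * c ^ (b - 1) * (Real.Gamma a * Real.Gamma b / Real.Gamma (a + b)) * c := by
    rw [sub]; field_simp
  rw [key, ← Real.rpow_add hc0]
  rw [show a + b - 1 = (a - 1 + (b - 1)) + 1 by ring, Real.rpow_add_one hc0.ne']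
  ring

lemma II_sub {r : ℝ} (t : ℝ) (hr : -1 < r) :
    IntervalIntegrable (fun τ => (t - τ) ^ r) volume 0 t := by
  have h := (intervalIntegrable_rpow' (a := t - 0) (b := t - t) hr).comp_sub_left t
  simpa using h

lemma int_sub {r t : ℝ} (hr : -1 < r) (ht : 0 ≤ t) :
    ∫ τ in (0:ℝ)..t, (t - τ) ^ r = t ^ (r + 1) / (r + 1) := by
  rw [intervalIntegral.integral_comp_sub_left (fun u => u ^ r) t, sub_self, sub_zero,
    integral_rpow (Or.inl hr), Real.zero_rpow (by linarith)]
  simp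

variable {α : ℝ} {g : ℝ → ℝ}

/-- integrability of the inner integrand -/
lemma inner_II (hα : α ∈ Ioo (0:ℝ) 1) (hg : Continuous g) (t : ℝ) :
    IntervalIntegrable (fun τ => (t - τ) ^ (-α) * g τ) volume 0 t :=
  (II_sub t (by linarith [hα.2])).mul_continuousOn hg.continuousOn

lemma inner_IO (hα : α ∈ Ioo (0:ℝ) 1) (hg : Continuous g) {t : ℝ} (ht : 0 ≤ t) :
    IntegrableOn (fun τ => (t - τ) ^ (-α) * g τ) (Ioc 0 t) volume := by
  exact (inner_II hα hg t).1

/-- norm bound for the inner integral -/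
lemma norm_bound (hα : α ∈ Ioo (0:ℝ) 1) (hg : Continuous g) {t M : ℝ} (ht : 0 ≤ t)
    (hM : ∀ τ ∈ Icc 0 t, |g τ| ≤ M) :
    ∫ τ in Ioc 0 t, ‖(t - τ) ^ (-α) * g τ‖ ≤ M * (t ^ (1 - α) / (1 - α)) := by
  have hM0 : 0 ≤ M := le_trans (abs_nonneg _) (hM 0 (by constructor <;> simp [ht]))
  have hint : IntegrableOn (fun τ => (t - τ) ^ (-α) * M) (Ioc 0 t) volume := by
    exact ((II_sub t (by linarith [hα.2] : (-1:ℝ) < -α)).mul_const M).1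
  have hle : ∫ τ in Ioc 0 t, ‖(t - τ) ^ (-α) * g τ‖ ≤ ∫ τ in Ioc 0 t, (t - τ) ^ (-α) * M := by
    apply setIntegral_mono_on ((inner_IO hα hg ht).norm) hint measurableSet_Ioc
    intro τ hτ
    rw [norm_mul, Real.norm_rpow_of_nonneg (by linarith [hτ.2])]
    have h1 : ‖t - τ‖ = t - τ := Real.norm_of_nonneg (by linarith [hτ.2])
    rw [h1]
    exact mul_le_mul_of_nonneg_left
      (by rw [Real.norm_eq_abs]; exact hM τ ⟨hτ.1.le, hτ.2⟩)
      (Real.rpow_nonneg (by linarith [hτ.2]) _)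
  calc ∫ τ in Ioc 0 t, ‖(t - τ) ^ (-α) * g τ‖ ≤ ∫ τ in Ioc 0 t, (t - τ) ^ (-α) * M := hle
    _ = (∫ τ in (0:ℝ)..t, (t - τ) ^ (-α)) * M := by
        rw [intervalIntegral.integral_of_le ht, ← MeasureTheory.integral_mul_const]
    _ = t ^ (1 - α) / (1 - α) * M := by
        rw [int_sub (by linarith [hα.2]) ht, show -α + 1 = 1 - α from by ring]
    _ = M * (t ^ (1 - α) / (1 - α)) := by ring

lemma fubini_step (hα : α ∈ Ioo (0:ℝ) 1) (hg : Continuous g) {x : ℝ} (hx : 0 < x) :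
    ∫ t in Ioc 0 x, ((x - t) ^ (α - 1) * ∫ τ in Ioc 0 t, (t - τ) ^ (-α) * g τ)
      = (Real.Gamma α * Real.Gamma (1 - α)) * ∫ τ in Ioc 0 x, g τ := by
  obtain ⟨M, hM⟩ := (isCompact_Icc (a := (0:ℝ)) (b := x)).exists_bound_of_continuousOn
    hg.continuousOn
  set μ := volume.restrict (Ioc (0:ℝ) x) with hμ
  set f : ℝ × ℝ → ℝ := fun p =>
    if p.2 < p.1 then (x - p.1) ^ (α - 1) * ((p.1 - p.2) ^ (-α) * g p.2) else 0 with hf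
  have hαm : -α ≠ 0 := by have := hα.1; intro h; linarith [neg_eq_zero.mp h]
  have hmeas : Measurable f := by
    have m0 : ∀ c : ℝ, Measurable fun y : ℝ => y ^ c := fun c => by measurability
    apply Measurable.ite (measurableSet_lt measurable_snd measurable_fst) _ measurable_const
    exact ((m0 (α - 1)).comp (measurable_const.sub measurable_fst)).mul
      (((m0 (-α)).comp (measurable_fst.sub measurable_snd)).mul
        (hg.measurable.comp measurable_snd))
  have hsec : ∀ t ∈ Ioc (0:ℝ) x, ∀ τ, τ ∈ Ioc (0:ℝ) x →
      f (t, τ) = Set.indicator (Ioc 0 t)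
        (fun τ => (x - t) ^ (α - 1) * ((t - τ) ^ (-α) * g τ)) τ := by
    intro t ht τ hτ
    rcases lt_trichotomy τ t with h | h | h
    · simp [hf, Set.indicator_apply, Set.mem_Ioc, h, hτ.1, h.le]
    · subst h
      simp [hf, Set.indicator_apply, Set.mem_Ioc, hτ.1, Real.zero_rpow hαm]
    · simp [hf, Set.indicator_apply, Set.mem_Ioc, asymm h, h.not_ge]
  have hsecint : ∀ t ∈ Ioc (0:ℝ) x,
      ∫ τ, f (t, τ) ∂μ = (x - t) ^ (α - 1) * ∫ τ in Ioc 0 t, (t - τ) ^ (-α) * g τ := by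
    intro t ht
    rw [hμ, setIntegral_congr_fun measurableSet_Ioc (hsec t ht),
      MeasureTheory.integral_indicator measurableSet_Ioc,
      Measure.restrict_restrict measurableSet_Ioc, Set.Ioc_inter_Ioc]
    simp only [max_self, min_eq_left ht.2]
    rw [MeasureTheory.integral_const_mul]
  have hsecInt : ∀ t ∈ Ioc (0:ℝ) x, Integrable (fun τ => f (t, τ)) μ := by
    intro t ht
    have hind : Integrable (Set.indicator (Ioc 0 t)
        (fun τ => (x - t) ^ (α - 1) * ((t - τ) ^ (-α) * g τ))) μ := by
      rw [hμ, integrable_indicator_iff measurableSet_Ioc, IntegrableOn,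
        Measure.restrict_restrict measurableSet_Ioc, Set.Ioc_inter_Ioc]
      simp only [max_self, min_eq_left ht.2]
      exact (inner_IO hα hg ht.1.le).const_mul _
    apply hind.congr
    filter_upwards [ae_restrict_mem measurableSet_Ioc] with τ hτ
    exact (hsec t ht τ hτ).symm
  have hM0 : 0 ≤ M := le_trans (norm_nonneg _) (hM 0 ⟨le_refl _, hx.le⟩)
  have h1α : (0:ℝ) < 1 - α := by linarith [hα.2]
  have hnormbound : ∀ t ∈ Ioc (0:ℝ) x,
      ∫ τ, ‖f (t, τ)‖ ∂μ ≤ (x - t) ^ (α - 1) * (M * (x ^ (1 - α) / (1 - α))) := by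
    intro t ht
    have heq : ∫ τ, ‖f (t, τ)‖ ∂μ
        = (x - t) ^ (α - 1) * ∫ τ in Ioc 0 t, ‖(t - τ) ^ (-α) * g τ‖ := by
      rw [hμ, setIntegral_congr_fun measurableSet_Ioc
        (fun τ hτ => by rw [hsec t ht τ hτ, norm_indicator_eq_indicator_norm]),
        MeasureTheory.integral_indicator measurableSet_Ioc,
        Measure.restrict_restrict measurableSet_Ioc, Set.Ioc_inter_Ioc]
      simp only [max_self, min_eq_left ht.2]
      have : ∀ τ, ‖(x - t) ^ (α - 1) * ((t - τ) ^ (-α) * g τ)‖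
          = (x - t) ^ (α - 1) * ‖(t - τ) ^ (-α) * g τ‖ := by
        intro τ
        rw [norm_mul, Real.norm_rpow_of_nonneg (by linarith [ht.2]),
          Real.norm_of_nonneg (by linarith [ht.2])]
      simp_rw [this]
      rw [MeasureTheory.integral_const_mul]
    rw [heq]
    apply mul_le_mul_of_nonneg_left _ (Real.rpow_nonneg (by linarith [ht.2]) _)
    calc ∫ τ in Ioc 0 t, ‖(t - τ) ^ (-α) * g τ‖
        ≤ M * (t ^ (1 - α) / (1 - α)) :=
          norm_bound hα hg ht.1.le (fun τ hτ => by
            rw [← Real.norm_eq_abs]; exact hM τ ⟨hτ.1, le_trans hτ.2 ht.2⟩)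
      _ ≤ M * (x ^ (1 - α) / (1 - α)) := by
          apply mul_le_mul_of_nonneg_left _ hM0
          simp only [div_eq_mul_inv]
          exact mul_le_mul_of_nonneg_right (Real.rpow_le_rpow ht.1.le ht.2 h1α.le)
            (inv_pos.mpr h1α).le
  have hfint : Integrable f (μ.prod μ) := by
    rw [MeasureTheory.integrable_prod_iff hmeas.aestronglyMeasurable]
    constructor
    · filter_upwards [ae_restrict_mem measurableSet_Ioc] with t ht
      exact hsecInt t ht
    · apply Integrable.mono' (g := fun t => (x - t) ^ (α - 1) * (M * (x ^ (1 - α) / (1 - α))))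
      · exact ((II_sub x (show (-1:ℝ) < α - 1 by linarith [hα.1])).mul_const _).1
      · exact (hmeas.aestronglyMeasurable.norm).integral_prod_right'
      · filter_upwards [ae_restrict_mem measurableSet_Ioc] with t ht
        rw [Real.norm_of_nonneg (integral_nonneg (fun τ => norm_nonneg _))]
        exact hnormbound t ht
  have hτsec : ∀ᵐ τ ∂μ, ∫ t, f (t, τ) ∂μ = (Real.Gamma α * Real.Gamma (1 - α)) * g τ := by
    have hne : ∀ᵐ τ ∂μ, τ ≠ x := by
      rw [hμ, ae_iff]
      have h1 : {τ : ℝ | ¬τ ≠ x} ⊆ {x} := fun τ hτ => by simpa using not_not.mp hτ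
      apply measure_mono_null h1
      rw [Measure.restrict_apply (measurableSet_singleton x)]
      exact measure_mono_null Set.inter_subset_left Real.volume_singleton
    filter_upwards [ae_restrict_mem measurableSet_Ioc, hne] with τ hτ hτx
    have hτx' : τ < x := lt_of_le_of_ne hτ.2 hτx
    have e1 : ∫ t, f (t, τ) ∂μ
        = ∫ t in Ioc τ x, (x - t) ^ (α - 1) * ((t - τ) ^ (-α) * g τ) := by
      rw [hμ, setIntegral_congr_fun measurableSet_Ioc
        (g := Set.indicator (Ioc τ x) (fun t => (x - t) ^ (α - 1) * ((t - τ) ^ (-α) * g τ)))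
        (fun t ht => ?_), MeasureTheory.integral_indicator measurableSet_Ioc,
        Measure.restrict_restrict measurableSet_Ioc, Set.Ioc_inter_Ioc]
      · simp only [max_eq_left hτ.1.le, min_self]
      · rcases lt_or_ge τ t with h | h
        · simp [hf, Set.indicator_apply, Set.mem_Ioc, h, ht.2]
        · simp [hf, Set.indicator_apply, Set.mem_Ioc, h.not_gt, not_lt.mpr h]
    rw [e1, ← intervalIntegral.integral_of_le hτx'.le]
    have e2 : ∫ t in τ..x, (x - t) ^ (α - 1) * ((t - τ) ^ (-α) * g τ)
        = (∫ t in τ..x, (x - t) ^ (α - 1) * (t - τ) ^ ((1 - α) - 1)) * g τ := by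
      rw [← intervalIntegral.integral_mul_const]
      apply intervalIntegral.integral_congr
      intro t _
      rw [show (1 - α) - 1 = -α by ring]; ring
    rw [e2, conv_kernel hα.1 h1α hτx', show α + (1 - α) - 1 = 0 by ring, Real.rpow_zero,
      show α + (1 - α) = 1 by ring, Real.Gamma_one]
    ring
  have swap := MeasureTheory.integral_integral_swap (μ := μ) (ν := μ)
    (f := fun t τ => f (t, τ)) hfint
  calc ∫ t in Ioc 0 x, ((x - t) ^ (α - 1) * ∫ τ in Ioc 0 t, (t - τ) ^ (-α) * g τ)
      = ∫ t, (∫ τ, f (t, τ) ∂μ) ∂μ := by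
        rw [hμ]
        exact (setIntegral_congr_fun measurableSet_Ioc fun t ht => (hsecint t ht)).symm
    _ = ∫ τ, (∫ t, f (t, τ) ∂μ) ∂μ := swap
    _ = ∫ τ, (Real.Gamma α * Real.Gamma (1 - α)) * g τ ∂μ := integral_congr_ae hτsec
    _ = (Real.Gamma α * Real.Gamma (1 - α)) * ∫ τ in Ioc 0 x, g τ := by
        rw [MeasureTheory.integral_const_mul]

lemma key {T α β : ℝ} (hT : 0 < T) (hα : α ∈ Ioo (0:ℝ) 1) (hβ : β ∈ Ioo (-(1:ℝ)/2) (-α))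
    (g : ℝ → ℝ) (hg : Continuous g)
    (hD : ∀ t ∈ Ioo (0:ℝ) T, HasDerivAt
      (fun s => (1 / Real.Gamma (1 - α)) * ∫ τ in (0:ℝ)..s, (s - τ) ^ (-α) * g τ) (t ^ β) t) :
    ∀ t ∈ Ioc (0:ℝ) T, g t = Real.Gamma (β + 1) / Real.Gamma (α + β + 1) * t ^ (α + β) := by
  obtain ⟨hα0, hα1⟩ := hα
  obtain ⟨hβl, hβu⟩ := hβ
  have h1α : (0:ℝ) < 1 - α := by linarith
  have hβ1 : (0:ℝ) < β + 1 := by linarith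
  have hαβ1 : (0:ℝ) < α + β + 1 := by linarith
  have hG1α : (0:ℝ) < Real.Gamma (1 - α) := Real.Gamma_pos_of_pos h1α
  have hGα : (0:ℝ) < Real.Gamma α := Real.Gamma_pos_of_pos hα0
  have hGβ1 : (0:ℝ) < Real.Gamma (β + 1) := Real.Gamma_pos_of_pos hβ1
  have hGαβ1 : (0:ℝ) < Real.Gamma (α + β + 1) := Real.Gamma_pos_of_pos hαβ1
  set F : ℝ → ℝ := fun s => (1 / Real.Gamma (1 - α)) * ∫ τ in (0:ℝ)..s, (s - τ) ^ (-α) * g τ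
    with hF
  obtain ⟨M, hM⟩ := (isCompact_Icc (a := (0:ℝ)) (b := T)).exists_bound_of_continuousOn
    hg.continuousOn
  -- Step A : F tends to 0 at 0+
  have stepA : Tendsto F (𝓝[>] (0:ℝ)) (𝓝 0) := by
    apply squeeze_zero_norm'
    · filter_upwards [Ioc_mem_nhdsGT_of_mem (α := ℝ) ⟨le_refl 0, hT⟩] with t ht
      have hb : ∫ τ in Ioc 0 t, ‖(t - τ) ^ (-α) * g τ‖ ≤ M * (t ^ (1 - α) / (1 - α)) :=
        norm_bound ⟨hα0, hα1⟩ hg ht.1.le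
          (fun τ hτ => by rw [← Real.norm_eq_abs]; exact hM τ ⟨hτ.1, le_trans hτ.2 ht.2⟩)
      have : ‖∫ τ in (0:ℝ)..t, (t - τ) ^ (-α) * g τ‖ ≤ M * (t ^ (1 - α) / (1 - α)) := by
        rw [intervalIntegral.integral_of_le ht.1.le]
        exact le_trans (norm_integral_le_integral_norm _) hb
      calc ‖F t‖ = (1 / Real.Gamma (1 - α)) * ‖∫ τ in (0:ℝ)..t, (t - τ) ^ (-α) * g τ‖ := by
            rw [hF, norm_mul, Real.norm_of_nonneg (by positivity)]
        _ ≤ (1 / Real.Gamma (1 - α)) * (M * (t ^ (1 - α) / (1 - α))) :=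
            mul_le_mul_of_nonneg_left this (by positivity)
    · have h0 : Tendsto (fun t : ℝ => t ^ (1 - α)) (𝓝[>] (0:ℝ)) (𝓝 0) := by
        have := (Real.continuousAt_rpow_const 0 (1 - α) (Or.inr h1α.le)).tendsto
        rw [Real.zero_rpow h1α.ne'] at this
        exact this.mono_left nhdsWithin_le_nhds
      have := ((h0.div_const (1 - α)).const_mul M).const_mul (1 / Real.Gamma (1 - α))
      simpa using this
  -- Step B : F t = t^(β+1)/(β+1) on Ioo 0 T
  have stepB : ∀ t ∈ Ioo (0:ℝ) T, F t = t ^ (β + 1) / (β + 1) := by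
    intro t ht
    have h_ev : ∀ s ∈ Ioo (0:ℝ) t, F t - F s = (t ^ (β + 1) - s ^ (β + 1)) / (β + 1) := by
      intro s hs
      have hst : s ≤ t := hs.2.le
      have hsub : uIcc s t ⊆ Ioo (0:ℝ) T := by
        rw [uIcc_of_le hst]
        exact fun u hu => ⟨lt_of_lt_of_le hs.1 hu.1, lt_of_le_of_lt hu.2 ht.2⟩
      have hFTC := intervalIntegral.integral_eq_sub_of_hasDerivAt
        (f := F) (f' := fun u => u ^ β)
        (fun u hu => hD u (hsub hu))
        (ContinuousOn.intervalIntegrable (fun u hu => (Real.continuousAt_rpow_const u β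
          (Or.inl (ne_of_gt (hsub hu).1))).continuousWithinAt))
      rw [integral_rpow (Or.inl (by linarith : (-1:ℝ) < β))] at hFTC
      rw [← hFTC]
    have l1 : Tendsto (fun s => F t - F s) (𝓝[>] (0:ℝ)) (𝓝 (F t - 0)) :=
      tendsto_const_nhds.sub stepA
    have h0 : Tendsto (fun s : ℝ => s ^ (β + 1)) (𝓝[>] (0:ℝ)) (𝓝 0) := by
      have := (Real.continuousAt_rpow_const 0 (β + 1) (Or.inr hβ1.le)).tendsto
      rw [Real.zero_rpow hβ1.ne'] at this
      exact this.mono_left nhdsWithin_le_nhds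
    have l2 : Tendsto (fun s : ℝ => (t ^ (β + 1) - s ^ (β + 1)) / (β + 1)) (𝓝[>] (0:ℝ))
        (𝓝 ((t ^ (β + 1) - 0) / (β + 1))) := (tendsto_const_nhds.sub h0).div_const _
    have l1' : Tendsto (fun s => F t - F s) (𝓝[>] (0:ℝ)) (𝓝 ((t ^ (β + 1) - 0) / (β + 1))) := by
      apply l2.congr'
      filter_upwards [Ioo_mem_nhdsGT_of_mem (α := ℝ) ⟨le_refl 0, ht.1⟩] with s hs
      exact (h_ev s hs).symm
    have huniq := tendsto_nhds_unique l1 l1'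
    rw [sub_zero, sub_zero] at huniq
    rw [huniq]
  -- Step C : inner set integral formula
  have stepC : ∀ t ∈ Ioo (0:ℝ) T,
      (∫ τ in Ioc 0 t, (t - τ) ^ (-α) * g τ)
        = Real.Gamma (1 - α) * (t ^ (β + 1) / (β + 1)) := by
    intro t ht
    have hB : (1 / Real.Gamma (1 - α)) * ∫ τ in Ioc 0 t, (t - τ) ^ (-α) * g τ
        = t ^ (β + 1) / (β + 1) := by
      rw [← intervalIntegral.integral_of_le ht.1.le]
      exact stepB t ht
    have hne : Real.Gamma (1 - α) ≠ 0 := hG1α.ne'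
    field_simp at hB ⊢
    linarith [hB]
  -- Step D : ∫ g = C x^(α+β+1) on Ioo 0 T
  have stepD : ∀ x ∈ Ioo (0:ℝ) T,
      ∫ τ in Ioc 0 x, g τ
        = (Real.Gamma (β + 1) / Real.Gamma (α + β + 2)) * x ^ (α + β + 1) := by
    intro x hx
    have hfub := fubini_step ⟨hα0, hα1⟩ hg hx.1
    have hcongr : ∫ t in Ioc 0 x, ((x - t) ^ (α - 1) * ∫ τ in Ioc 0 t, (t - τ) ^ (-α) * g τ)
        = ∫ t in Ioc 0 x,
            ((x - t) ^ (α - 1) * (t - 0) ^ ((β + 2) - 1)) * (Real.Gamma (1 - α) / (β + 1)) := by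
      apply setIntegral_congr_fun measurableSet_Ioc
      intro t ht
      dsimp only
      rw [stepC t ⟨ht.1, lt_of_le_of_lt ht.2 hx.2⟩]
      rw [sub_zero, show (β + 2) - 1 = β + 1 by ring]
      ring
    rw [hcongr] at hfub
    rw [← intervalIntegral.integral_of_le hx.1.le, intervalIntegral.integral_mul_const,
      conv_kernel hα0 (by linarith : (0:ℝ) < β + 2) hx.1] at hfub
    rw [sub_zero, show α + (β + 2) - 1 = α + β + 1 by ring] at hfub
    have hGβ2 : Real.Gamma (β + 2) = (β + 1) * Real.Gamma (β + 1) := by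
      rw [show β + 2 = (β + 1) + 1 by ring, Real.Gamma_add_one hβ1.ne']
    have hGαβ2 : (0:ℝ) < Real.Gamma (α + β + 2) := Real.Gamma_pos_of_pos (by linarith)
    rw [show α + (β + 2) = α + β + 2 by ring, hGβ2] at hfub
    have hne1 : Real.Gamma α ≠ 0 := hGα.ne'
    have hne2 : Real.Gamma (1 - α) ≠ 0 := hG1α.ne'
    have hne3 : Real.Gamma (α + β + 2) ≠ 0 := hGαβ2.ne'
    apply mul_left_cancel₀ (mul_ne_zero hne1 hne2)
    rw [← hfub]
    field_simp
  -- Step E : g t = c t^(α+β) on Ioo 0 T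
  have hc2 : Real.Gamma (α + β + 2) = (α + β + 1) * Real.Gamma (α + β + 1) := by
    rw [show α + β + 2 = (α + β + 1) + 1 by ring, Real.Gamma_add_one hαβ1.ne']
  have stepE : ∀ t ∈ Ioo (0:ℝ) T,
      g t = Real.Gamma (β + 1) / Real.Gamma (α + β + 1) * t ^ (α + β) := by
    intro t ht
    have hGd : HasDerivAt (fun x => ∫ τ in (0:ℝ)..x, g τ) (g t) t :=
      intervalIntegral.integral_hasDerivAt_right (hg.intervalIntegrable 0 t)
        ⟨univ, univ_mem, hg.aestronglyMeasurable⟩ hg.continuousAt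
    have hRd : HasDerivAt
        (fun x : ℝ => (Real.Gamma (β + 1) / Real.Gamma (α + β + 2)) * x ^ (α + β + 1))
        ((Real.Gamma (β + 1) / Real.Gamma (α + β + 2)) * ((α + β + 1) * t ^ (α + β + 1 - 1)))
        t := (Real.hasDerivAt_rpow_const (Or.inl ht.1.ne')).const_mul _
    have hev : (fun x => ∫ τ in (0:ℝ)..x, g τ) =ᶠ[𝓝 t]
        (fun x : ℝ => (Real.Gamma (β + 1) / Real.Gamma (α + β + 2)) * x ^ (α + β + 1)) := by
      filter_upwards [isOpen_Ioo.mem_nhds ht] with x hx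
      rw [intervalIntegral.integral_of_le hx.1.le, stepD x hx]
    have hGd' := hRd.congr_of_eventuallyEq hev
    have := hGd.unique hGd'
    rw [this, show α + β + 1 - 1 = α + β by ring, hc2]
    field_simp
  -- Step F : extension to T
  intro t ht
  rcases lt_or_eq_of_le ht.2 with h | h
  · exact stepE t ⟨ht.1, h⟩
  · subst h
    have l1 : Tendsto g (𝓝[<] t) (𝓝 (g t)) :=
      hg.continuousAt.tendsto.mono_left nhdsWithin_le_nhds
    have l2 : Tendsto (fun s : ℝ => Real.Gamma (β + 1) / Real.Gamma (α + β + 1) * s ^ (α + β))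
        (𝓝[<] t) (𝓝 (Real.Gamma (β + 1) / Real.Gamma (α + β + 1) * t ^ (α + β))) :=
      (((Real.continuousAt_rpow_const t (α + β) (Or.inl ht.1.ne')).tendsto).const_mul
        _).mono_left nhdsWithin_le_nhds
    have l1' : Tendsto g (𝓝[<] t)
        (𝓝 (Real.Gamma (β + 1) / Real.Gamma (α + β + 1) * t ^ (α + β))) := by
      apply l2.congr'
      filter_upwards [Ioo_mem_nhdsLT_of_mem (α := ℝ) ⟨ht.1, le_refl t⟩] with s hs
      exact (stepE s hs).symm
    exact tendsto_nhds_unique l1 l1'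

theorem no_continuous_solution (T α β : ℝ) (hT : 0 < T)
    (hα : α ∈ Ioo (0:ℝ) 1) (hβ : β ∈ Ioo (-(1:ℝ)/2) (-α)) :
    MemLp (fun t : ℝ => t ^ β) 2 (volume.restrict (Ioc 0 T)) ∧
    (¬ ∃ w : ℝ → ℝ, ContinuousOn w (Icc 0 T) ∧
        ∀ t ∈ Ioc (0:ℝ) T, caputoD α w t = t ^ β) ∧
    (∀ w : ℝ → ℝ, ContinuousOn w (Icc 0 T) →
      (∀ t ∈ Ioc (0:ℝ) T, caputoD α w t = t ^ β) →
      ∀ t ∈ Ioc (0:ℝ) T,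
        w t - w 0 = Real.Gamma (β + 1) / Real.Gamma (α + β + 1) * t ^ (α + β)) := by
  have hα0 := hα.1
  have hα1 := hα.2
  have hβl := hβ.1
  have hβu := hβ.2
  have hβ1 : (0:ℝ) < β + 1 := by linarith
  have hαβ1 : (0:ℝ) < α + β + 1 := by linarith
  have hαβ : α + β < 0 := by linarith
  have hGβ1 : (0:ℝ) < Real.Gamma (β + 1) := Real.Gamma_pos_of_pos hβ1
  have hGαβ1 : (0:ℝ) < Real.Gamma (α + β + 1) := Real.Gamma_pos_of_pos hαβ1
  have hc : (0:ℝ) < Real.Gamma (β + 1) / Real.Gamma (α + β + 1) := div_pos hGβ1 hGαβ1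
  -- Part 3
  have part3 : ∀ w : ℝ → ℝ, ContinuousOn w (Icc 0 T) →
      (∀ t ∈ Ioc (0:ℝ) T, caputoD α w t = t ^ β) →
      ∀ t ∈ Ioc (0:ℝ) T,
        w t - w 0 = Real.Gamma (β + 1) / Real.Gamma (α + β + 1) * t ^ (α + β) := by
    intro w hw hDw
    set g : ℝ → ℝ := fun τ => w (min (max τ 0) T) - w 0 with hgdef
    have hclamp : ∀ τ : ℝ, min (max τ 0) T ∈ Icc (0:ℝ) T :=
      fun τ => ⟨le_min (le_max_right _ _) hT.le, min_le_right _ _⟩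
    have hg : Continuous g := by
      apply Continuous.sub _ continuous_const
      exact hw.comp_continuous
        ((continuous_id.max continuous_const).min continuous_const) hclamp
    have hgeq : ∀ τ ∈ Icc (0:ℝ) T, g τ = w τ - w 0 := by
      intro τ hτ
      rw [hgdef]
      dsimp only
      rw [max_eq_left hτ.1, min_eq_left hτ.2]
    have hD' : ∀ t ∈ Ioo (0:ℝ) T, HasDerivAt
        (fun s => (1 / Real.Gamma (1 - α)) * ∫ τ in (0:ℝ)..s, (s - τ) ^ (-α) * g τ)
        (t ^ β) t := by
      intro t ht
      have hev : (fun s => riemannLiouville (1 - α) (fun τ => w τ - w 0) s) =ᶠ[𝓝 t]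
          (fun s => (1 / Real.Gamma (1 - α)) * ∫ τ in (0:ℝ)..s, (s - τ) ^ (-α) * g τ) := by
        filter_upwards [isOpen_Ioo.mem_nhds ht] with s hs
        rw [riemannLiouville]
        congr 1
        apply intervalIntegral.integral_congr
        intro τ hτ
        rw [uIcc_of_le hs.1.le] at hτ
        simp only [show (1 - α) - 1 = -α by ring]
        rw [hgeq τ ⟨hτ.1, le_trans hτ.2 hs.2.le⟩]
      have hder : deriv
          (fun s => (1 / Real.Gamma (1 - α)) * ∫ τ in (0:ℝ)..s, (s - τ) ^ (-α) * g τ) t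
          = t ^ β := by
        rw [← hev.deriv_eq]
        exact hDw t ⟨ht.1, ht.2.le⟩
      have htβ : (0:ℝ) < t ^ β := Real.rpow_pos_of_pos ht.1 β
      have hdiff : DifferentiableAt ℝ
          (fun s => (1 / Real.Gamma (1 - α)) * ∫ τ in (0:ℝ)..s, (s - τ) ^ (-α) * g τ) t := by
        by_contra hnd
        rw [deriv_zero_of_not_differentiableAt hnd] at hder
        exact htβ.ne hder
      exact hder ▸ hdiff.hasDerivAt
    intro t ht
    rw [← hgeq t ⟨ht.1.le, ht.2⟩]
    exact key hT hα hβ g hg hD' t ht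
  refine ⟨?_, ?_, part3⟩
  -- Part 1
  · have haesm : AEStronglyMeasurable (fun t : ℝ => t ^ β) (volume.restrict (Ioc 0 T)) :=
      ContinuousOn.aestronglyMeasurable (fun t ht =>
        (Real.continuousAt_rpow_const t β (Or.inl (ne_of_gt ht.1))).continuousWithinAt)
        measurableSet_Ioc
    rw [memLp_two_iff_integrable_sq haesm]
    have hio : IntegrableOn (fun t : ℝ => t ^ (β * 2)) (Ioc 0 T) volume :=
      (intervalIntegrable_rpow' (by linarith : (-1:ℝ) < β * 2)).1
    apply (integrableOn_congr_fun (fun t ht => ?_) measurableSet_Ioc).mpr hio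
    show ((t : ℝ) ^ β) ^ (2:ℕ) = t ^ (β * 2)
    rw [← Real.rpow_natCast (t ^ β) 2, ← Real.rpow_mul ht.1.le]
    norm_num
  -- Part 2
  · rintro ⟨w, hw, hDw⟩
    have hsol := part3 w hw hDw
    have hne : (𝓝[Ioc (0:ℝ) T] (0:ℝ)).NeBot := by
      apply mem_closure_iff_nhdsWithin_neBot.mp
      rw [closure_Ioc hT.ne]
      exact ⟨le_refl 0, hT.le⟩
    have l0 : Tendsto (fun t => w t - w 0) (𝓝[Ioc (0:ℝ) T] (0:ℝ)) (𝓝 0) := by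
      have hw0 : ContinuousWithinAt w (Icc 0 T) 0 := hw 0 ⟨le_refl 0, hT.le⟩
      have h2 := (hw0.tendsto.mono_left (nhdsWithin_mono 0 Ioc_subset_Icc_self)).sub
        (tendsto_const_nhds (x := w 0))
      simpa using h2
    have linf : Tendsto (fun t : ℝ => Real.Gamma (β + 1) / Real.Gamma (α + β + 1) * t ^ (α + β))
        (𝓝[Ioc (0:ℝ) T] (0:ℝ)) atTop := by
      have h1 : Tendsto (fun t : ℝ => t ^ (α + β)) (𝓝[>] (0:ℝ)) atTop := by
        have h2 := (tendsto_rpow_atTop (show (0:ℝ) < -(α + β) by linarith)).comp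
          tendsto_inv_nhdsGT_zero
        apply h2.congr'
        filter_upwards [self_mem_nhdsWithin] with t ht
        have ht0 : (0:ℝ) < t := ht
        rw [Function.comp_apply, ← Real.rpow_neg_one t, ← Real.rpow_mul ht0.le]
        norm_num
      exact ((h1.const_mul_atTop hc).mono_left (nhdsWithin_mono 0 (fun τ hτ => hτ.1)))
    have l0' : Tendsto (fun t : ℝ => Real.Gamma (β + 1) / Real.Gamma (α + β + 1) * t ^ (α + β))
        (𝓝[Ioc (0:ℝ) T] (0:ℝ)) (𝓝 0) := by
      apply l0.congr'
      filter_upwards [self_mem_nhdsWithin] with t ht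
      exact hsol t ht
    exact not_tendsto_nhds_of_tendsto_atTop linf 0 l0'
end
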